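/- arXiv:2510.27402 — 11 statements merged into one kernel-verified Lean document; each statement's English description precedes it below -/
import Mathlib

section
/- Let m : ℤ → M be moments and (P_n)_{n≥0} a family of monic matrix polynomials, P_n(λ) = λ^n I + Σ_{j=0}^{n−1} γ_{n,j} λ^j, such that for every n ≥ 0 one has ⟨P_n, λ^i⟩ = 0 for all 0 ≤ i ≤ n−1, and such that H_n := ⟨P_n, λ^n⟩ and τ_n := ⟨P_n, λ^{−1}⟩ are invertible matrices for every n ≥ 0. Then for every n ≥ 1, setting a_n := −τ_n τ_{n−1}^{−1} and b_n := a_n H_{n−1} H_n^{−1}, the three-term recurrence λ(P_n(λ) + a_n P_{n−1}(λ)) = P_{n+1}(λ) + b_n P_n(λ) holds as an identity of matrix polynomials, i.e. for every j one has γ_{n,j−1} + a_n γ_{n−1,j−1} = γ_{n+1,j} + b_n γ_{n,j}, with the conventions γ_{k,k} = I and γ_{k,j} = 0 for j < 0 or j > k. -/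
/-- The pairing `⟨P_n, λ^i⟩ = Σ_{j=0}^{n} γ_{n,j} m_{j-i}` of the `n`-th monic matrix
polynomial (with coefficients `γ n j`, `γ n n = I`) with `λ^i`. -/
noncomputable def lauPairing (p : ℕ) (m : ℤ → Matrix (Fin p) (Fin p) ℝ)
    (γ : ℕ → ℤ → Matrix (Fin p) (Fin p) ℝ) (n : ℕ) (i : ℤ) : Matrix (Fin p) (Fin p) ℝ :=
  ∑ j ∈ Finset.range (n + 1), γ n (j : ℤ) * m ((j : ℤ) - i)

/-- `H_n := ⟨P_n, λ^n⟩`. -/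
noncomputable def lauH (p : ℕ) (m : ℤ → Matrix (Fin p) (Fin p) ℝ)
    (γ : ℕ → ℤ → Matrix (Fin p) (Fin p) ℝ) (n : ℕ) : Matrix (Fin p) (Fin p) ℝ :=
  lauPairing p m γ n (n : ℤ)

/-- `τ_n := ⟨P_n, λ^{-1}⟩`. -/
noncomputable def lauTau (p : ℕ) (m : ℤ → Matrix (Fin p) (Fin p) ℝ)
    (γ : ℕ → ℤ → Matrix (Fin p) (Fin p) ℝ) (n : ℕ) : Matrix (Fin p) (Fin p) ℝ :=
  lauPairing p m γ n (-1)

/-- `a_n := -τ_n τ_{n-1}⁻¹`. -/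
noncomputable def lauA (p : ℕ) (m : ℤ → Matrix (Fin p) (Fin p) ℝ)
    (γ : ℕ → ℤ → Matrix (Fin p) (Fin p) ℝ) (n : ℕ) : Matrix (Fin p) (Fin p) ℝ :=
  -(lauTau p m γ n) * (lauTau p m γ (n - 1))⁻¹

/-- `b_n := a_n H_{n-1} H_n⁻¹`. -/
noncomputable def lauB (p : ℕ) (m : ℤ → Matrix (Fin p) (Fin p) ℝ)
    (γ : ℕ → ℤ → Matrix (Fin p) (Fin p) ℝ) (n : ℕ) : Matrix (Fin p) (Fin p) ℝ :=
  lauA p m γ n * lauH p m γ (n - 1) * (lauH p m γ n)⁻¹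

noncomputable def coefC {p : ℕ} (γ : ℕ → ℤ → Matrix (Fin p) (Fin p) ℝ)
    (δ : ℤ → Matrix (Fin p) (Fin p) ℝ) (n : ℕ) : ℕ → Matrix (Fin p) (Fin p) ℝ
  | g => δ ((n:ℤ) - g) -
      ∑ l ∈ (Finset.range g).attach,
        coefC γ δ n l.1 * γ (n - l.1) ((n:ℤ) - g)
decreasing_by exact Finset.mem_range.mp l.2

theorem coefC_eq {p : ℕ} (γ : ℕ → ℤ → Matrix (Fin p) (Fin p) ℝ)
    (δ : ℤ → Matrix (Fin p) (Fin p) ℝ) (n g : ℕ) :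
    coefC γ δ n g = δ ((n:ℤ) - g) -
      ∑ l ∈ Finset.range g, coefC γ δ n l * γ (n - l) ((n:ℤ) - g) := by
  rw [coefC, Finset.sum_attach (Finset.range g) (fun l => coefC γ δ n l * γ (n - l) ((n:ℤ) - g))]

/-- the three-term recurrence
`λ(P_n + a_n P_{n-1}) = P_{n+1} + b_n P_n` as an identity of coefficients. -/
theorem statement0 {p : ℕ} (hp : 1 ≤ p)
    (m : ℤ → Matrix (Fin p) (Fin p) ℝ)
    (γ : ℕ → ℤ → Matrix (Fin p) (Fin p) ℝ)
    (hmonic : ∀ k : ℕ, γ k (k : ℤ) = 1)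
    (hlow : ∀ (k : ℕ) (j : ℤ), j < 0 → γ k j = 0)
    (hhigh : ∀ (k : ℕ) (j : ℤ), (k : ℤ) < j → γ k j = 0)
    (horth : ∀ (n : ℕ) (i : ℕ), i < n → lauPairing p m γ n (i : ℤ) = 0)
    (hH : ∀ n : ℕ, IsUnit (lauH p m γ n))
    (hτ : ∀ n : ℕ, IsUnit (lauTau p m γ n)) :
    ∀ n : ℕ, 1 ≤ n → ∀ j : ℤ,
      γ n (j - 1) + lauA p m γ n * γ (n - 1) (j - 1) =
        γ (n + 1) j + lauB p m γ n * γ n j := by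
  intro n hn
  set A := lauA p m γ n with hA
  set B := lauB p m γ n with hB
  set δ : ℤ → Matrix (Fin p) (Fin p) ℝ :=
    fun j => γ n (j - 1) + A * γ (n - 1) (j - 1) - (γ (n + 1) j + B * γ n j) with hδdef
  suffices h : ∀ j : ℤ, δ j = 0 by
    intro j
    have h0 := h j
    simp only [hδdef] at h0
    exact sub_eq_zero.mp h0
  -- trivial vanishing outside [0, n]
  have hδ_neg : ∀ j : ℤ, j < 0 → δ j = 0 := by
    intro j hj
    simp only [hδdef]
    rw [hlow n (j-1) (by omega), hlow (n-1) (j-1) (by omega), hlow (n+1) j hj, hlow n j hj]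
    simp
  have hδ_big : ∀ j : ℤ, (n:ℤ) < j → δ j = 0 := by
    intro j hj
    simp only [hδdef]
    rcases eq_or_lt_of_le (by omega : (n:ℤ) + 1 ≤ j) with h | h
    · rw [← h]
      have h1 : ((n:ℤ) + 1 - 1) = (n:ℤ) := by ring
      have h2 := hmonic (n+1)
      push_cast at h2
      rw [h1, hmonic n, hhigh (n-1) (n:ℤ) (by omega), h2, hhigh n ((n:ℤ)+1) (by omega)]
      simp
    · rw [hhigh n (j-1) (by omega), hhigh (n-1) (j-1) (by omega),
        hhigh (n+1) j (by push_cast; omega), hhigh n j (by omega)]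
      simp
  -- pairing of the residual polynomial
  set Pd : ℤ → Matrix (Fin p) (Fin p) ℝ :=
    fun i => ∑ j ∈ Finset.range (n+2), δ j * m ((j:ℤ) - i) with hPddef
  have hdecomp : ∀ i : ℤ, Pd i =
      lauPairing p m γ n (i-1) + A * lauPairing p m γ (n-1) (i-1)
        - (lauPairing p m γ (n+1) i + B * lauPairing p m γ n i) := by
    intro i
    simp only [hPddef, hδdef, add_mul, sub_mul]
    rw [Finset.sum_sub_distrib, Finset.sum_add_distrib, Finset.sum_add_distrib]
    have h1 : ∑ j ∈ Finset.range (n+2), γ n ((j:ℤ)-1) * m ((j:ℤ)-i)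
        = lauPairing p m γ n (i-1) := by
      rw [Finset.sum_range_succ']
      rw [show ((0:ℕ):ℤ) - 1 = -1 by norm_num, hlow n (-1) (by norm_num), zero_mul, add_zero]
      refine Finset.sum_congr rfl fun j _ => ?_
      push_cast
      rw [show (j:ℤ)+1-1 = (j:ℤ) by ring, show (j:ℤ)+1-i = (j:ℤ)-(i-1) by ring]
    have h2 : ∑ j ∈ Finset.range (n+2), (A * γ (n-1) ((j:ℤ)-1)) * m ((j:ℤ)-i)
        = A * lauPairing p m γ (n-1) (i-1) := by
      simp only [mul_assoc]
      rw [← Finset.mul_sum]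
      congr 1
      rw [Finset.sum_range_succ']
      rw [show ((0:ℕ):ℤ) - 1 = -1 by norm_num, hlow (n-1) (-1) (by norm_num), zero_mul, add_zero]
      rw [Finset.sum_range_succ, hhigh (n-1) (((n+1:ℕ):ℤ)-1) (by push_cast; omega), zero_mul, add_zero]
      rw [lauPairing, show n - 1 + 1 = n from by omega]
      refine Finset.sum_congr rfl fun j _ => ?_
      push_cast
      rw [show (j:ℤ)+1-1 = (j:ℤ) by ring, show (j:ℤ)+1-i = (j:ℤ)-(i-1) by ring]
    have h3 : ∑ j ∈ Finset.range (n+2), γ (n+1) ((j:ℤ)) * m ((j:ℤ)-i)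
        = lauPairing p m γ (n+1) i := rfl
    have h4 : ∑ j ∈ Finset.range (n+2), (B * γ n ((j:ℤ))) * m ((j:ℤ)-i)
        = B * lauPairing p m γ n i := by
      simp only [mul_assoc]
      rw [← Finset.mul_sum]
      congr 1
      rw [Finset.sum_range_succ, hhigh n (((n+1:ℕ):ℤ)) (by push_cast; omega), zero_mul, add_zero]
      rfl
    rw [h1, h2, h3, h4]
  -- the pairings vanish for 0 ≤ i ≤ n
  have hτinv : (lauTau p m γ (n-1))⁻¹ * lauTau p m γ (n-1) = 1 :=
    Matrix.nonsing_inv_mul _ ((Matrix.isUnit_iff_isUnit_det _).mp (hτ (n-1)))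
  have hHinv : (lauH p m γ n)⁻¹ * lauH p m γ n = 1 :=
    Matrix.nonsing_inv_mul _ ((Matrix.isUnit_iff_isUnit_det _).mp (hH n))
  have hPd0 : ∀ i : ℕ, i ≤ n → Pd (i:ℤ) = 0 := by
    intro i hi
    rw [hdecomp]
    rcases Nat.eq_zero_or_pos i with h0 | hpos
    · subst h0
      have t3 : lauPairing p m γ (n+1) ((0:ℕ):ℤ) = 0 := horth (n+1) 0 (by omega)
      have t4 : lauPairing p m γ n ((0:ℕ):ℤ) = 0 := horth n 0 (by omega)
      push_cast at t3 t4 ⊢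
      rw [t3, t4]
      have key : A * lauPairing p m γ (n-1) (-1) = -(lauTau p m γ n) := by
        rw [hA, lauA, mul_assoc]
        rw [show lauPairing p m γ (n-1) (-1) = lauTau p m γ (n-1) from rfl, hτinv, mul_one]
      rw [key, show lauPairing p m γ n (-1) = lauTau p m γ n from rfl]
      simp
    · rcases eq_or_lt_of_le hi with hieq | hilt
      · subst hieq
        have t1 : lauPairing p m γ i ((i:ℤ)-1) = 0 := by
          have := horth i (i-1) (by omega)
          rwa [show ((i-1:ℕ):ℤ) = (i:ℤ)-1 by omega] at this
        have t2 : lauPairing p m γ (i-1) ((i:ℤ)-1) = lauH p m γ (i-1) := by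
          rw [lauH, show ((i-1:ℕ):ℤ) = (i:ℤ)-1 by omega]
        have t3 : lauPairing p m γ (i+1) ((i:ℤ)) = 0 := horth (i+1) i (by omega)
        have t4 : lauPairing p m γ i ((i:ℤ)) = lauH p m γ i := rfl
        rw [t1, t2, t3, t4]
        have key : B * lauH p m γ i = A * lauH p m γ (i-1) := by
          rw [hB, lauB, ← hA, mul_assoc, hHinv, mul_one]
        rw [key]
        simp
      · have t1 : lauPairing p m γ n ((i:ℤ)-1) = 0 := by
          have := horth n (i-1) (by omega)
          rwa [show ((i-1:ℕ):ℤ) = (i:ℤ)-1 by omega] at this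
        have t2 : lauPairing p m γ (n-1) ((i:ℤ)-1) = 0 := by
          have := horth (n-1) (i-1) (by omega)
          rwa [show ((i-1:ℕ):ℤ) = (i:ℤ)-1 by omega] at this
        have t3 : lauPairing p m γ (n+1) ((i:ℤ)) = 0 := horth (n+1) i (by omega)
        have t4 : lauPairing p m γ n ((i:ℤ)) = 0 := horth n i (by omega)
        rw [t1, t2, t3, t4]
        simp
  -- triangular expansion of δ
  have hrep : ∀ j : ℤ,
      δ j = ∑ g ∈ Finset.range (n+1), coefC γ δ n g * γ (n - g) j := by
    intro j
    by_cases hneg : j < 0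
    · rw [hδ_neg j hneg]
      symm
      exact Finset.sum_eq_zero fun g _ => by rw [hlow (n-g) j hneg, mul_zero]
    by_cases hbig : (n:ℤ) < j
    · rw [hδ_big j hbig]
      symm
      refine Finset.sum_eq_zero fun g _ => ?_
      rw [hhigh (n-g) j (by omega), mul_zero]
    push_neg at hneg hbig
    set k := j.toNat with hk
    have hkj : (k:ℤ) = j := Int.toNat_of_nonneg hneg
    have hkn : k ≤ n := by omega
    rw [← hkj]
    set g₀ := n - k with hg0
    rw [Finset.range_eq_Ico,
      ← Finset.sum_Ico_consecutive _ (by omega : 0 ≤ g₀+1) (by omega : g₀+1 ≤ n+1)]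
    have hIco0 : Finset.Ico 0 (g₀+1) = Finset.range (g₀+1) := by
      rw [Finset.range_eq_Ico]
    rw [hIco0]
    have hz : ∑ g ∈ Finset.Ico (g₀+1) (n+1), coefC γ δ n g * γ (n - g) (k:ℤ) = 0 := by
      refine Finset.sum_eq_zero fun g hg => ?_
      rw [Finset.mem_Ico] at hg
      rw [hhigh (n-g) (k:ℤ) (by omega), mul_zero]
    rw [hz, add_zero, Finset.sum_range_succ]
    rw [show n - g₀ = k from by omega, hmonic k, mul_one]
    rw [coefC_eq]
    rw [show (n:ℤ) - (g₀:ℤ) = (k:ℤ) from by omega]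
    abel
  -- pairing via expansion
  have hPd_rep : ∀ i : ℤ, Pd i =
      ∑ g ∈ Finset.range (n+1), coefC γ δ n g * lauPairing p m γ (n - g) i := by
    intro i
    simp only [hPddef]
    calc ∑ j ∈ Finset.range (n+2), δ j * m ((j:ℤ) - i)
        = ∑ j ∈ Finset.range (n+2), ∑ g ∈ Finset.range (n+1),
            coefC γ δ n g * γ (n - g) (j:ℤ) * m ((j:ℤ) - i) := by
          refine Finset.sum_congr rfl fun j _ => ?_
          rw [hrep (j:ℤ), Finset.sum_mul]
      _ = ∑ g ∈ Finset.range (n+1), ∑ j ∈ Finset.range (n+2),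
            coefC γ δ n g * (γ (n - g) (j:ℤ) * m ((j:ℤ) - i)) := by
          rw [Finset.sum_comm]
          simp only [mul_assoc]
      _ = ∑ g ∈ Finset.range (n+1), coefC γ δ n g * lauPairing p m γ (n - g) i := by
          refine Finset.sum_congr rfl fun g _ => ?_
          rw [← Finset.mul_sum]
          congr 1
          rw [lauPairing]
          symm
          refine Finset.sum_subset (Finset.range_subset_range.mpr (by omega)) fun j hj hj' => ?_
          rw [Finset.mem_range] at hj hj'
          rw [hhigh (n-g) (j:ℤ) (by omega), zero_mul]
  -- kill the coefficients by strong induction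
  have key : ∀ i : ℕ, i ≤ n → coefC γ δ n (n - i) = 0 := by
    intro i
    induction i using Nat.strong_induction_on with
    | _ i IH =>
      intro hi
      have h0 : Pd (i:ℤ) = 0 := hPd0 i hi
      rw [hPd_rep] at h0
      have hsum : ∑ g ∈ Finset.range (n+1), coefC γ δ n g * lauPairing p m γ (n - g) (i:ℤ)
          = coefC γ δ n (n-i) * lauH p m γ i := by
        rw [Finset.sum_eq_single (n - i)]
        · rw [show n - (n - i) = i from by omega]; rfl
        · intro g hg hgne
          rw [Finset.mem_range] at hg
          by_cases hlt : g < n - i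
          · rw [horth (n-g) i (by omega), mul_zero]
          · have hgt : n - i < g := by omega
            have hzz : coefC γ δ n g = 0 := by
              have := IH (n - g) (by omega) (by omega)
              rwa [show n - (n - g) = g from by omega] at this
            rw [hzz, zero_mul]
        · intro habs
          exact absurd (Finset.mem_range.mpr (by omega)) habs
      rw [hsum] at h0
      have hinv : lauH p m γ i * (lauH p m γ i)⁻¹ = 1 :=
        Matrix.mul_nonsing_inv _ ((Matrix.isUnit_iff_isUnit_det _).mp (hH i))
      calc coefC γ δ n (n-i)
          = coefC γ δ n (n-i) * (lauH p m γ i * (lauH p m γ i)⁻¹) := by rw [hinv, mul_one]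
        _ = (coefC γ δ n (n-i) * lauH p m γ i) * (lauH p m γ i)⁻¹ := by rw [mul_assoc]
        _ = 0 := by rw [h0, zero_mul]
  have hczero : ∀ g : ℕ, g ≤ n → coefC γ δ n g = 0 := by
    intro g hg
    have := key (n - g) (by omega)
    rwa [show n - (n - g) = g from by omega] at this
  intro j
  rw [hrep j]
  exact Finset.sum_eq_zero fun g hg => by
    rw [hczero g (by have := Finset.mem_range.mp hg; omega), zero_mul]
end

section
/- Let m : ℤ → M be moments, let n ≥ 1, and assume the block moment matrix Λ_{n−1} is invertible as an (np)×(np) real matrix. Define γ_{n,j} := −(θ_n Λ_{n−1}^{−1})_j for 0 ≤ j ≤ n−1, the j-th p×p block of the p×(np) matrix θ_n Λ_{n−1}^{−1}, and set P_n(λ) := λ^n I + Σ_{j=0}^{n−1} γ_{n,j} λ^j. Then ⟨P_n, λ^i⟩ = 0 for every 0 ≤ i ≤ n−1; that is, the quasideterminant (Schur-complement) expression for the Laurent biorthogonal polynomial P_n is orthogonal to 1, λ, …, λ^{n−1}. -/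
/-- The block moment matrix `Λ_{n-1}` whose `(k,l)` block is `m_{k-l}`,
regarded as an `(np)×(np)` real matrix. -/
noncomputable def blockLam (p n : ℕ) (m : ℤ → Matrix (Fin p) (Fin p) ℝ) :
    Matrix (Fin n × Fin p) (Fin n × Fin p) ℝ :=
  Matrix.of fun kx ly => m ((kx.1 : ℤ) - (ly.1 : ℤ)) kx.2 ly.2

/-- The block row `θ_n = (m_n, m_{n-1}, …, m_1)`, a `p×(np)` real matrix. -/
noncomputable def blockTheta (p n : ℕ) (m : ℤ → Matrix (Fin p) (Fin p) ℝ) :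
    Matrix (Fin p) (Fin n × Fin p) ℝ :=
  Matrix.of fun x jy => m ((n : ℤ) - (jy.1 : ℤ)) x jy.2

/-- The block column `col(m_r, …, m_{r+n-1})`, an `(np)×p` real matrix. -/
noncomputable def blockCol (p n : ℕ) (r : ℤ) (m : ℤ → Matrix (Fin p) (Fin p) ℝ) :
    Matrix (Fin n × Fin p) (Fin p) ℝ :=
  Matrix.of fun jx y => m (r + (jx.1 : ℤ)) jx.2 y

/-- `γ_{n,j} := -(θ_n Λ_{n-1}⁻¹)_j`, the negative of the `j`-th `p×p` block of the
`p×(np)` matrix `θ_n Λ_{n-1}⁻¹`. -/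
noncomputable def gammaQD (p n : ℕ) (m : ℤ → Matrix (Fin p) (Fin p) ℝ) (j : Fin n) :
    Matrix (Fin p) (Fin p) ℝ :=
  Matrix.of fun x y => -((blockTheta p n m * (blockLam p n m)⁻¹) x (j, y))

/-- the Schur-complement (quasideterminant) polynomial
`P_n(λ) = λ^n I + Σ_{j<n} γ_{n,j} λ^j` satisfies `⟨P_n, λ^i⟩ = 0` for `0 ≤ i ≤ n-1`. -/
theorem statement1 {p : ℕ} (hp : 1 ≤ p)
    (m : ℤ → Matrix (Fin p) (Fin p) ℝ)
    (n : ℕ) (hn : 1 ≤ n)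
    (hΛ : IsUnit (blockLam p n m)) :
    ∀ i : ℕ, i < n →
      m ((n : ℤ) - (i : ℤ)) + ∑ j : Fin n, gammaQD p n m j * m ((j : ℤ) - (i : ℤ)) = 0 := by

  intro i hi
  have hdet : IsUnit (blockLam p n m).det := (Matrix.isUnit_iff_isUnit_det _).mp hΛ
  have hinv : (blockLam p n m)⁻¹ * blockLam p n m = 1 := Matrix.nonsing_inv_mul _ hdet
  have key : blockTheta p n m * (blockLam p n m)⁻¹ * blockLam p n m = blockTheta p n m := by
    rw [Matrix.mul_assoc, hinv, Matrix.mul_one]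
  ext x y
  have hkey := congrFun (congrFun key x) (⟨i, hi⟩, y)
  simp only [Matrix.mul_apply, Fintype.sum_prod_type] at hkey
  simp only [Matrix.add_apply, Matrix.sum_apply, Matrix.mul_apply, gammaQD, Matrix.of_apply,
    Matrix.zero_apply, neg_mul, Finset.sum_neg_distrib]
  rw [show ∀ a b : ℝ, a + -b = 0 ↔ b = a from fun a b => by constructor <;> intro h <;> linarith]
  convert hkey using 2 with j
  · simp only [Matrix.mul_apply, Fintype.sum_prod_type, blockLam, Matrix.of_apply]
  · rfl
end

section
/- Let m : ℤ → M be moments, let n ≥ 1, and assume the block moment matrix Λ_{n−1} is invertible as an (np)×(np) real matrix. If P_n(λ) = λ^n I + Σ_{j=0}^{n−1} γ_{n,j} λ^j is a monic matrix polynomial satisfying ⟨P_n, λ^i⟩ = 0 for all 0 ≤ i ≤ n−1, then its coefficients are uniquely determined and given by the Schur-complement (quasideterminant) formula γ_{n,j} = −(θ_n Λ_{n−1}^{−1})_j, the negative of the j-th p×p block of the p×(np) matrix θ_n Λ_{n−1}^{−1}. -/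
/-- The `j`-th `p×p` block of the `p×(np)` matrix `θ_n Λ_{n-1}⁻¹`. -/
noncomputable def thetaLamInvBlock (p n : ℕ) (m : ℤ → Matrix (Fin p) (Fin p) ℝ) (j : Fin n) :
    Matrix (Fin p) (Fin p) ℝ :=
  Matrix.of fun x y => (blockTheta p n m * (blockLam p n m)⁻¹) x (j, y)

/-- if a monic matrix polynomial `P_n(λ) = λ^n I + Σ_{j<n} γ_j λ^j`
satisfies `⟨P_n, λ^i⟩ = 0` for all `0 ≤ i ≤ n-1` and `Λ_{n-1}` is invertible, then
its coefficients are uniquely given by `γ_j = -(θ_n Λ_{n-1}⁻¹)_j`. -/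
theorem statement3 {p : ℕ} (hp : 1 ≤ p)
    (m : ℤ → Matrix (Fin p) (Fin p) ℝ)
    (n : ℕ) (hn : 1 ≤ n)
    (hΛ : IsUnit (blockLam p n m))
    (γ : Fin n → Matrix (Fin p) (Fin p) ℝ)
    (horth : ∀ i : ℕ, i < n →
      m ((n : ℤ) - (i : ℤ)) + ∑ j : Fin n, γ j * m ((j : ℤ) - (i : ℤ)) = 0) :
    ∀ j : Fin n, γ j = -(thetaLamInvBlock p n m j) := by
  set Λ := blockLam p n m with hΛdef
  have hdet : IsUnit Λ.det := (Matrix.isUnit_iff_isUnit_det Λ).mp hΛ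
  -- big coefficient matrix
  set G : Matrix (Fin p) (Fin n × Fin p) ℝ :=
    Matrix.of (fun x jy => γ jy.1 x jy.2) with hGdef
  have key : blockTheta p n m + G * Λ = 0 := by
    ext x ⟨i, y⟩
    have h := horth i i.isLt
    have h' := congrFun (congrFun h x) y
    simp only [Matrix.add_apply, Matrix.zero_apply, Matrix.sum_apply] at h' ⊢
    rw [show (G * Λ) x (i, y) = ∑ j : Fin n, (γ j * m ((j : ℤ) - (i : ℤ))) x y from ?_]
    · simpa [blockTheta] using h'
    · simp only [Matrix.mul_apply, Fintype.sum_prod_type, blockLam, hGdef, Matrix.of_apply]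
      rfl
  have hG : G = -(blockTheta p n m * Λ⁻¹) := by
    have h1 : G * Λ = -(blockTheta p n m) := by
      have := key
      linear_combination (norm := abel) this
    have h2 : G * Λ * Λ⁻¹ = -(blockTheta p n m) * Λ⁻¹ := by rw [h1]
    rwa [Matrix.mul_assoc, Matrix.mul_nonsing_inv _ hdet, Matrix.mul_one, Matrix.neg_mul] at h2
  intro j
  ext x y
  have := congrFun (congrFun hG x) (j, y)
  simpa [thetaLamInvBlock, hGdef] using this
end

section
/- Let α₀, α₁, α₂ ∈ ℝ. Let m_j : ℝ → M (j ∈ ℤ) be differentiable moments satisfying m_j′(t) = α₀ j m_j(t) + α₁ m_{j+1}(t) + α₂ m_{j−1}(t) for all j and t. Let (P_n(·,t))_{n≥0} be monic matrix polynomials P_n(λ,t) = λ^n I + Σ_{j=0}^{n−1} γ_{n,j}(t) λ^j with differentiable coefficients, satisfying for every n and t the orthogonality ⟨P_n(·,t), λ^i⟩_t = 0 for 0 ≤ i ≤ n−1, and assume H_n(t) := ⟨P_n(·,t), λ^n⟩_t and τ_n(t) := ⟨P_n(·,t), λ^{−1}⟩_t are invertible for all n, t. Set a_n := −τ_n τ_{n−1}^{−1}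 and b_n := a_n H_{n−1} H_n^{−1}. Define the total-derivative polynomial (DP_n)(λ,t) := Σ_{j=0}^{n} (γ_{n,j}′(t) + j α₀ γ_{n,j}(t)) λ^j (with γ_{n,n} = I). Then for every n ≥ 1 and t, DP_n = n α₀ P_n + α₁ a_n (λ P_{n−1} − P_n) − α₂ b_n^{−1} a_n P_{n−1}, as an identity of matrix polynomials in λ. -/
/-- The time-dependent pairing `⟨P_n(·,t), λ^i⟩_t = Σ_{j=0}^{n} γ_{n,j}(t) m_{j-i}(t)`. -/
noncomputable def lauPairingT (p : ℕ) (m : ℤ → ℝ → Matrix (Fin p) (Fin p) ℝ)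
    (γ : ℕ → ℤ → ℝ → Matrix (Fin p) (Fin p) ℝ) (n : ℕ) (i : ℤ) (t : ℝ) :
    Matrix (Fin p) (Fin p) ℝ :=
  ∑ j ∈ Finset.range (n + 1), γ n (j : ℤ) t * m ((j : ℤ) - i) t

/-- `H_n(t) := ⟨P_n(·,t), λ^n⟩_t`. -/
noncomputable def lauHT (p : ℕ) (m : ℤ → ℝ → Matrix (Fin p) (Fin p) ℝ)
    (γ : ℕ → ℤ → ℝ → Matrix (Fin p) (Fin p) ℝ) (n : ℕ) (t : ℝ) :
    Matrix (Fin p) (Fin p) ℝ :=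
  lauPairingT p m γ n (n : ℤ) t

/-- `τ_n(t) := ⟨P_n(·,t), λ^{-1}⟩_t`. -/
noncomputable def lauTauT (p : ℕ) (m : ℤ → ℝ → Matrix (Fin p) (Fin p) ℝ)
    (γ : ℕ → ℤ → ℝ → Matrix (Fin p) (Fin p) ℝ) (n : ℕ) (t : ℝ) :
    Matrix (Fin p) (Fin p) ℝ :=
  lauPairingT p m γ n (-1) t

/-- `a_n(t) := -τ_n(t) τ_{n-1}(t)⁻¹`. -/
noncomputable def lauAT (p : ℕ) (m : ℤ → ℝ → Matrix (Fin p) (Fin p) ℝ)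
    (γ : ℕ → ℤ → ℝ → Matrix (Fin p) (Fin p) ℝ) (n : ℕ) (t : ℝ) :
    Matrix (Fin p) (Fin p) ℝ :=
  -(lauTauT p m γ n t) * (lauTauT p m γ (n - 1) t)⁻¹

/-- `b_n(t) := a_n(t) H_{n-1}(t) H_n(t)⁻¹`. -/
noncomputable def lauBT (p : ℕ) (m : ℤ → ℝ → Matrix (Fin p) (Fin p) ℝ)
    (γ : ℕ → ℤ → ℝ → Matrix (Fin p) (Fin p) ℝ) (n : ℕ) (t : ℝ) :
    Matrix (Fin p) (Fin p) ℝ :=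
  lauAT p m γ n t * lauHT p m γ (n - 1) t * (lauHT p m γ n t)⁻¹

section aux

variable {p : ℕ} (m : ℤ → ℝ → Matrix (Fin p) (Fin p) ℝ)
    (γ : ℕ → ℤ → ℝ → Matrix (Fin p) (Fin p) ℝ)

lemma lauA_mul_tau (nn : ℕ) (t : ℝ) (hτ : ∀ (n : ℕ) (t : ℝ), IsUnit (lauTauT p m γ n t)) :
    lauAT p m γ (nn + 1) t * lauTauT p m γ nn t = -(lauTauT p m γ (nn + 1) t) := by
  have hd := (Matrix.isUnit_iff_isUnit_det _).mp (hτ nn t)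
  rw [lauAT, Nat.add_sub_cancel, mul_assoc, Matrix.nonsing_inv_mul _ hd, mul_one]

lemma lauA_isUnit (nn : ℕ) (t : ℝ) (hτ : ∀ (n : ℕ) (t : ℝ), IsUnit (lauTauT p m γ n t)) :
    IsUnit (lauAT p m γ (nn + 1) t) := by
  rw [lauAT, Nat.add_sub_cancel]
  exact ((hτ (nn + 1) t).neg).mul (Matrix.isUnit_nonsing_inv_iff.mpr (hτ nn t))

lemma lauB_inv_mul (nn : ℕ) (t : ℝ)
    (hH : ∀ (n : ℕ) (t : ℝ), IsUnit (lauHT p m γ n t))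
    (hτ : ∀ (n : ℕ) (t : ℝ), IsUnit (lauTauT p m γ n t)) :
    (lauBT p m γ (nn + 1) t)⁻¹ * lauAT p m γ (nn + 1) t * lauHT p m γ nn t
      = lauHT p m γ (nn + 1) t := by
  have hA := (Matrix.isUnit_iff_isUnit_det _).mp (lauA_isUnit m γ nn t hτ)
  have hHn := (Matrix.isUnit_iff_isUnit_det _).mp (hH (nn + 1) t)
  have hHnn := (Matrix.isUnit_iff_isUnit_det _).mp (hH nn t)
  rw [lauBT, Nat.add_sub_cancel, Matrix.mul_inv_rev, Matrix.mul_inv_rev,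
    Matrix.nonsing_inv_nonsing_inv _ hHn]
  calc lauHT p m γ (nn+1) t * ((lauHT p m γ nn t)⁻¹ * (lauAT p m γ (nn+1) t)⁻¹) *
        lauAT p m γ (nn+1) t * lauHT p m γ nn t
      = lauHT p m γ (nn+1) t * ((lauHT p m γ nn t)⁻¹ *
          (((lauAT p m γ (nn+1) t)⁻¹ * lauAT p m γ (nn+1) t) * lauHT p m γ nn t)) := by
        simp only [mul_assoc]
    _ = lauHT p m γ (nn + 1) t := by
        rw [Matrix.nonsing_inv_mul _ hA, one_mul, Matrix.nonsing_inv_mul _ hHnn, mul_one]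

lemma lau_shift (hlow : ∀ (n : ℕ) (j : ℤ) (t : ℝ), j < 0 → γ n j t = 0)
    (nn : ℕ) (i : ℤ) (t : ℝ) :
    ∑ j ∈ Finset.range (nn + 1 + 1), γ nn ((j : ℤ) - 1) t * m ((j : ℤ) - i) t
      = lauPairingT p m γ nn (i - 1) t := by
  rw [Finset.sum_range_succ']
  rw [show ((0:ℕ):ℤ) - 1 = -1 by norm_num, hlow nn (-1) t (by norm_num), zero_mul, add_zero]
  refine Finset.sum_congr rfl fun x _ => ?_
  have e1 : ((x + 1 : ℕ) : ℤ) - 1 = (x : ℤ) := by push_cast; ring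
  have e2 : ((x + 1 : ℕ) : ℤ) - i = (x : ℤ) - (i - 1) := by push_cast; ring
  rw [e1, e2]

lemma lau_drop (hhigh : ∀ (n : ℕ) (j : ℤ) (t : ℝ), (n : ℤ) < j → γ n j t = 0)
    (nn : ℕ) (i : ℤ) (t : ℝ) :
    ∑ j ∈ Finset.range (nn + 1 + 1), γ nn (j : ℤ) t * m ((j : ℤ) - i) t
      = lauPairingT p m γ nn i t := by
  rw [Finset.sum_range_succ, hhigh nn ((nn + 1 : ℕ) : ℤ) t (by push_cast; omega), zero_mul,
    add_zero]
  rfl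

lemma lau_key (hmonic : ∀ (n : ℕ) (t : ℝ), γ n (n : ℤ) t = 1)
    (hlow : ∀ (n : ℕ) (j : ℤ) (t : ℝ), j < 0 → γ n j t = 0)
    (hhigh : ∀ (n : ℕ) (j : ℤ) (t : ℝ), (n : ℤ) < j → γ n j t = 0)
    (horth : ∀ (n : ℕ) (i : ℕ) (t : ℝ), i < n → lauPairingT p m γ n (i : ℤ) t = 0)
    (hH : ∀ (n : ℕ) (t : ℝ), IsUnit (lauHT p m γ n t)) (t : ℝ) :
    ∀ (k : ℕ) (R : ℤ → Matrix (Fin p) (Fin p) ℝ),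
      (∀ j : ℤ, j < 0 → R j = 0) → (∀ j : ℤ, (k : ℤ) ≤ j → R j = 0) →
      (∀ i : ℕ, i < k → ∑ j ∈ Finset.range k, R (j : ℤ) * m ((j : ℤ) - (i : ℤ)) t = 0) →
      ∀ j : ℤ, R j = 0 := by
  intro k
  induction k with
  | zero =>
    intro R hneg hdeg _ j
    rcases lt_or_ge j 0 with h | h
    · exact hneg j h
    · exact hdeg j (by exact_mod_cast h)
  | succ k ih =>
    intro R hneg hdeg hpair
    set Rk := R (k : ℤ) with hRk
    have hPk : ∀ i : ℤ, ∑ x ∈ Finset.range k, γ k (x:ℤ) t * m ((x:ℤ) - i) t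
        = lauPairingT p m γ k i t - m ((k:ℤ) - i) t := by
      intro i
      rw [lauPairingT, Finset.sum_range_succ, hmonic k t, one_mul, add_sub_cancel_right]
    have hR' : ∀ j : ℤ, R j - Rk * γ k j t = 0 := by
      apply ih (fun j => R j - Rk * γ k j t)
      · intro j hj; rw [hneg j hj, hlow k j t hj]; simp
      · intro j hj
        rcases eq_or_lt_of_le hj with h | h
        · rw [← h, hmonic k t]; simp [hRk, ← h]
        · rw [hdeg j (by omega), hhigh k j t h]; simp
      · intro i hi
        have hsum : ∑ x ∈ Finset.range (k+1), R (x:ℤ) * m ((x:ℤ) - (i:ℤ)) t = 0 :=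
          hpair i (by omega)
        rw [Finset.sum_range_succ, ← hRk] at hsum
        have h2 := hPk (i : ℤ)
        rw [horth k i t hi] at h2
        calc ∑ x ∈ Finset.range k, (R (x:ℤ) - Rk * γ k (x:ℤ) t) * m ((x:ℤ) - (i:ℤ)) t
            = (∑ x ∈ Finset.range k, R (x:ℤ) * m ((x:ℤ) - (i:ℤ)) t)
              - Rk * ∑ x ∈ Finset.range k, γ k (x:ℤ) t * m ((x:ℤ) - (i:ℤ)) t := by
              rw [Finset.mul_sum, ← Finset.sum_sub_distrib]
              exact Finset.sum_congr rfl fun x _ => by rw [sub_mul, mul_assoc]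
          _ = 0 := by
              rw [h2, eq_neg_of_add_eq_zero_left hsum]; simp [mul_sub]
    have hRj : ∀ j : ℤ, R j = Rk * γ k j t := fun j => sub_eq_zero.mp (hR' j)
    have hz : Rk * lauHT p m γ k t = 0 := by
      have hsum : ∑ x ∈ Finset.range (k+1), R (x:ℤ) * m ((x:ℤ) - (k:ℤ)) t = 0 :=
        hpair k (by omega)
      rw [lauHT, lauPairingT, Finset.mul_sum]
      rw [← hsum]
      exact Finset.sum_congr rfl fun x _ => by rw [hRj (x:ℤ), mul_assoc]
    have hdet := (Matrix.isUnit_iff_isUnit_det _).mp (hH k t)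
    have hRk0 : Rk = 0 := by
      have := congrArg (fun X => X * (lauHT p m γ k t)⁻¹) hz
      simpa [mul_assoc, Matrix.mul_nonsing_inv _ hdet] using this
    intro j
    rw [hRj j, hRk0, zero_mul]

lemma lau_deriv (α₀ α₁ α₂ : ℝ)
    (hm : ∀ (j : ℤ) (t : ℝ) (x y : Fin p),
      HasDerivAt (fun s => m j s x y)
        (((α₀ * (j : ℝ)) • m j t + α₁ • m (j + 1) t + α₂ • m (j - 1) t) x y) t)
    (γd : ℕ → ℤ → ℝ → Matrix (Fin p) (Fin p) ℝ)
    (hγd : ∀ (n : ℕ) (j : ℤ) (t : ℝ) (x y : Fin p),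
      HasDerivAt (fun s => γ n j s x y) (γd n j t x y) t)
    (horth : ∀ (n : ℕ) (i : ℕ) (t : ℝ), i < n → lauPairingT p m γ n (i : ℤ) t = 0)
    (n : ℕ) (i : ℕ) (hi : i < n) (t : ℝ) :
    ∑ j ∈ Finset.range (n + 1),
        (γd n (j : ℤ) t + (α₀ * (j : ℝ)) • γ n (j : ℤ) t) * m ((j : ℤ) - (i : ℤ)) t
      = -α₁ • lauPairingT p m γ n ((i : ℤ) - 1) t
        - α₂ • lauPairingT p m γ n ((i : ℤ) + 1) t := by
  set Z : Matrix (Fin p) (Fin p) ℝ :=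
    ∑ j ∈ Finset.range (n + 1),
      (γd n (j : ℤ) t * m ((j : ℤ) - (i : ℤ)) t
        + γ n (j : ℤ) t *
          ((α₀ * (((j : ℤ) - (i : ℤ) : ℤ) : ℝ)) • m ((j : ℤ) - (i : ℤ)) t
            + α₁ • m ((j : ℤ) - (i : ℤ) + 1) t + α₂ • m ((j : ℤ) - (i : ℤ) - 1) t)) with hZdef
  have hZ : Z = 0 := by
    ext x y
    have hder : HasDerivAt
        (fun s => ∑ j ∈ Finset.range (n + 1), ∑ k, γ n (j : ℤ) s x k * m ((j : ℤ) - (i : ℤ)) s k y)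
        (∑ j ∈ Finset.range (n + 1), ∑ k,
          (γd n (j : ℤ) t x k * m ((j : ℤ) - (i : ℤ)) t k y
            + γ n (j : ℤ) t x k *
              ((α₀ * (((j : ℤ) - (i : ℤ) : ℤ) : ℝ)) • m ((j : ℤ) - (i : ℤ)) t
                + α₁ • m ((j : ℤ) - (i : ℤ) + 1) t + α₂ • m ((j : ℤ) - (i : ℤ) - 1) t) k y)) t := by
      apply HasDerivAt.fun_sum
      intro j _
      apply HasDerivAt.fun_sum
      intro k _
      exact (hγd n (j : ℤ) t x k).mul (hm ((j : ℤ) - (i : ℤ)) t k y)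
    have hconst : (fun s => ∑ j ∈ Finset.range (n + 1), ∑ k,
        γ n (j : ℤ) s x k * m ((j : ℤ) - (i : ℤ)) s k y) = fun _ => (0 : ℝ) := by
      funext s
      have h0 := horth n i s hi
      calc ∑ j ∈ Finset.range (n + 1), ∑ k, γ n (j : ℤ) s x k * m ((j : ℤ) - (i : ℤ)) s k y
          = (lauPairingT p m γ n (i : ℤ) s) x y := by
            simp [lauPairingT, Matrix.sum_apply, Matrix.mul_apply]
        _ = 0 := by rw [h0]; rfl
    have h0' : HasDerivAt (fun s => ∑ j ∈ Finset.range (n + 1), ∑ k,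
        γ n (j : ℤ) s x k * m ((j : ℤ) - (i : ℤ)) s k y) 0 t := by
      rw [hconst]; exact hasDerivAt_const t 0
    have huniq := hder.unique h0'
    calc Z x y = ∑ j ∈ Finset.range (n + 1), ∑ k,
          (γd n (j : ℤ) t x k * m ((j : ℤ) - (i : ℤ)) t k y
            + γ n (j : ℤ) t x k *
              ((α₀ * (((j : ℤ) - (i : ℤ) : ℤ) : ℝ)) • m ((j : ℤ) - (i : ℤ)) t
                + α₁ • m ((j : ℤ) - (i : ℤ) + 1) t + α₂ • m ((j : ℤ) - (i : ℤ) - 1) t) k y) := by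
          simp [hZdef, Matrix.sum_apply, Matrix.mul_apply, Matrix.add_apply,
            Matrix.smul_apply, smul_eq_mul, Finset.sum_add_distrib]
      _ = 0 := huniq
  have e1 : ∀ j ∈ Finset.range (n + 1),
      (γd n (j : ℤ) t + (α₀ * (j : ℝ)) • γ n (j : ℤ) t) * m ((j : ℤ) - (i : ℤ)) t
        = (γd n (j : ℤ) t * m ((j : ℤ) - (i : ℤ)) t
            + γ n (j : ℤ) t *
              ((α₀ * (((j : ℤ) - (i : ℤ) : ℤ) : ℝ)) • m ((j : ℤ) - (i : ℤ)) t
                + α₁ • m ((j : ℤ) - (i : ℤ) + 1) t + α₂ • m ((j : ℤ) - (i : ℤ) - 1) t))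
          - α₁ • (γ n (j : ℤ) t * m ((j : ℤ) - ((i : ℤ) - 1)) t)
          - α₂ • (γ n (j : ℤ) t * m ((j : ℤ) - ((i : ℤ) + 1)) t)
          + (α₀ * (i : ℝ)) • (γ n (j : ℤ) t * m ((j : ℤ) - (i : ℤ)) t) := by
    intro j _
    have h1 : (j : ℤ) - ((i : ℤ) - 1) = (j : ℤ) - (i : ℤ) + 1 := by ring
    have h2 : (j : ℤ) - ((i : ℤ) + 1) = (j : ℤ) - (i : ℤ) - 1 := by ring
    rw [h1, h2]
    push_cast
    rw [mul_add, mul_add, Matrix.mul_smul, Matrix.mul_smul, Matrix.mul_smul, add_mul,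
      Matrix.smul_mul]
    module
  rw [Finset.sum_congr rfl e1, Finset.sum_add_distrib, Finset.sum_sub_distrib,
    Finset.sum_sub_distrib, ← Finset.smul_sum, ← Finset.smul_sum, ← Finset.smul_sum, ← hZdef, hZ]
  have hPi : ∑ j ∈ Finset.range (n + 1), γ n (j : ℤ) t * m ((j : ℤ) - (i : ℤ)) t = 0 :=
    horth n i t hi
  rw [hPi]
  rw [show (∑ j ∈ Finset.range (n + 1), γ n (j : ℤ) t * m ((j : ℤ) - ((i : ℤ) - 1)) t)
      = lauPairingT p m γ n ((i : ℤ) - 1) t from rfl,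
    show (∑ j ∈ Finset.range (n + 1), γ n (j : ℤ) t * m ((j : ℤ) - ((i : ℤ) + 1)) t)
      = lauPairingT p m γ n ((i : ℤ) + 1) t from rfl]
  module

end aux

/-- time evolution of the monic matrix Laurent biorthogonal
polynomials: `DP_n = nα₀ P_n + α₁ a_n (λ P_{n-1} - P_n) - α₂ b_n⁻¹ a_n P_{n-1}`,
as an identity between coefficients of matrix polynomials in `λ`, where
`(DP_n)(λ,t) = Σ_j (γ_{n,j}'(t) + jα₀ γ_{n,j}(t)) λ^j`. -/
theorem statement6 {p : ℕ} (hp : 1 ≤ p) (α₀ α₁ α₂ : ℝ)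
    (m : ℤ → ℝ → Matrix (Fin p) (Fin p) ℝ)
    (hm : ∀ (j : ℤ) (t : ℝ) (x y : Fin p),
      HasDerivAt (fun s => m j s x y)
        (((α₀ * (j : ℝ)) • m j t + α₁ • m (j + 1) t + α₂ • m (j - 1) t) x y) t)
    (γ γd : ℕ → ℤ → ℝ → Matrix (Fin p) (Fin p) ℝ)
    (hγd : ∀ (n : ℕ) (j : ℤ) (t : ℝ) (x y : Fin p),
      HasDerivAt (fun s => γ n j s x y) (γd n j t x y) t)
    (hmonic : ∀ (n : ℕ) (t : ℝ), γ n (n : ℤ) t = 1)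
    (hlow : ∀ (n : ℕ) (j : ℤ) (t : ℝ), j < 0 → γ n j t = 0)
    (hhigh : ∀ (n : ℕ) (j : ℤ) (t : ℝ), (n : ℤ) < j → γ n j t = 0)
    (horth : ∀ (n : ℕ) (i : ℕ) (t : ℝ), i < n → lauPairingT p m γ n (i : ℤ) t = 0)
    (hH : ∀ (n : ℕ) (t : ℝ), IsUnit (lauHT p m γ n t))
    (hτ : ∀ (n : ℕ) (t : ℝ), IsUnit (lauTauT p m γ n t)) :
    ∀ n : ℕ, 1 ≤ n → ∀ (t : ℝ) (j : ℤ),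
      γd n j t + ((j : ℝ) * α₀) • γ n j t =
        ((n : ℝ) * α₀) • γ n j t
          + α₁ • (lauAT p m γ n t * (γ (n - 1) (j - 1) t - γ n j t))
          - α₂ • ((lauBT p m γ n t)⁻¹ * lauAT p m γ n t * γ (n - 1) j t) := by
  intro n hn t j
  obtain ⟨nn, rfl⟩ : ∃ nn, n = nn + 1 := ⟨n - 1, by omega⟩
  simp only [Nat.add_sub_cancel]
  set A := lauAT p m γ (nn + 1) t with hA
  set Bi := (lauBT p m γ (nn + 1) t)⁻¹ with hBi
  set R : ℤ → Matrix (Fin p) (Fin p) ℝ := fun jj =>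
    γd (nn + 1) jj t + ((jj : ℝ) * α₀) • γ (nn + 1) jj t
      - ((((nn + 1 : ℕ)) : ℝ) * α₀) • γ (nn + 1) jj t
      - α₁ • (A * (γ nn (jj - 1) t - γ (nn + 1) jj t))
      + α₂ • (Bi * A * γ nn jj t) with hR
  have hconstd : ∀ (k : ℕ) (jj : ℤ) (c : Matrix (Fin p) (Fin p) ℝ),
      (∀ s, γ k jj s = c) → γd k jj t = 0 := by
    intro k jj c hc
    ext x y
    have h := hγd k jj t x y
    have he : (fun s => γ k jj s x y) = fun _ => c x y := funext fun s => by rw [hc s]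
    rw [he] at h
    simpa using h.unique (hasDerivAt_const t (c x y))
  have hRlow : ∀ jj : ℤ, jj < 0 → R jj = 0 := by
    intro jj hj
    have h1 : γ (nn + 1) jj t = 0 := hlow _ _ _ hj
    have h2 : γ nn (jj - 1) t = 0 := hlow _ _ _ (by omega)
    have h3 : γ nn jj t = 0 := hlow _ _ _ hj
    have h4 : γd (nn + 1) jj t = 0 := hconstd _ _ 0 (fun s => hlow _ _ _ hj)
    simp [hR, h1, h2, h3, h4]
  have hRhigh : ∀ jj : ℤ, (((nn + 1 : ℕ)) : ℤ) ≤ jj → R jj = 0 := by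
    intro jj hj
    rcases eq_or_lt_of_le hj with h | h
    · have h1 : γ (nn + 1) jj t = 1 := by rw [← h]; exact hmonic _ t
      have h2 : γ nn (jj - 1) t = 1 := by
        rw [← h, show (((nn + 1 : ℕ)) : ℤ) - 1 = (nn : ℤ) by push_cast; ring]
        exact hmonic _ t
      have h3 : γ nn jj t = 0 := hhigh _ _ _ (by omega)
      have h4 : γd (nn + 1) jj t = 0 := hconstd _ _ 1 (fun s => by rw [← h]; exact hmonic _ s)
      have hc : ((jj : ℝ)) = (((nn + 1 : ℕ)) : ℝ) := by rw [← h]; push_cast; ring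
      simp [hR, h1, h2, h3, h4, hc]
    · have h1 : γ (nn + 1) jj t = 0 := hhigh _ _ _ h
      have h2 : γ nn (jj - 1) t = 0 := hhigh _ _ _ (by push_cast at h ⊢; omega)
      have h3 : γ nn jj t = 0 := hhigh _ _ _ (by push_cast at h ⊢; omega)
      have h4 : γd (nn + 1) jj t = 0 := hconstd _ _ 0 (fun s => hhigh _ _ _ h)
      simp [hR, h1, h2, h3, h4]
  have hsplit : ∀ i : ℤ, ∑ jj ∈ Finset.range (nn + 1 + 1), R (jj : ℤ) * m ((jj : ℤ) - i) t
      = (∑ jj ∈ Finset.range (nn + 1 + 1),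
          (γd (nn + 1) (jj : ℤ) t + (α₀ * (jj : ℝ)) • γ (nn + 1) (jj : ℤ) t) * m ((jj : ℤ) - i) t)
        - ((((nn + 1 : ℕ)) : ℝ) * α₀) •
            (∑ jj ∈ Finset.range (nn + 1 + 1), γ (nn + 1) (jj : ℤ) t * m ((jj : ℤ) - i) t)
        - α₁ • (A * ((∑ jj ∈ Finset.range (nn + 1 + 1), γ nn ((jj : ℤ) - 1) t * m ((jj : ℤ) - i) t)
            - ∑ jj ∈ Finset.range (nn + 1 + 1), γ (nn + 1) (jj : ℤ) t * m ((jj : ℤ) - i) t))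
        + α₂ • (Bi * A * ∑ jj ∈ Finset.range (nn + 1 + 1), γ nn (jj : ℤ) t * m ((jj : ℤ) - i) t) := by
    intro i
    have key : ∀ jj ∈ Finset.range (nn + 1 + 1), R (jj : ℤ) * m ((jj : ℤ) - i) t =
        (γd (nn + 1) (jj : ℤ) t + (α₀ * (jj : ℝ)) • γ (nn + 1) (jj : ℤ) t) * m ((jj : ℤ) - i) t
        - ((((nn + 1 : ℕ)) : ℝ) * α₀) • (γ (nn + 1) (jj : ℤ) t * m ((jj : ℤ) - i) t)
        - α₁ • (A * (γ nn ((jj : ℤ) - 1) t * m ((jj : ℤ) - i) t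
            - γ (nn + 1) (jj : ℤ) t * m ((jj : ℤ) - i) t))
        + α₂ • (Bi * A * (γ nn (jj : ℤ) t * m ((jj : ℤ) - i) t)) := by
      intro jj _
      simp only [hR, add_mul, sub_mul, smul_mul_assoc, mul_sub, mul_assoc]
      module
    rw [Finset.sum_congr rfl key, Finset.sum_add_distrib, Finset.sum_sub_distrib,
      Finset.sum_sub_distrib, ← Finset.smul_sum, ← Finset.smul_sum, ← Finset.smul_sum,
      ← Finset.mul_sum, ← Finset.mul_sum, Finset.sum_sub_distrib]
  have hS : ∀ i : ℕ, i < nn + 1 →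
      ∑ jj ∈ Finset.range (nn + 1 + 1), R (jj : ℤ) * m ((jj : ℤ) - (i : ℤ)) t = 0 := by
    intro i hi
    rw [hsplit (i : ℤ)]
    rw [lau_deriv m γ α₀ α₁ α₂ hm γd hγd horth (nn + 1) i hi t]
    have hQ1 : (∑ jj ∈ Finset.range (nn + 1 + 1),
        γ (nn + 1) (jj : ℤ) t * m ((jj : ℤ) - (i : ℤ)) t) = 0 := horth (nn + 1) i t hi
    have hQ2 := lau_shift m γ hlow nn (i : ℤ) t
    have hQ3 := lau_drop m γ hhigh nn (i : ℤ) t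
    rw [hQ1, hQ2, hQ3, sub_zero]
    have hX1 : A * lauPairingT p m γ nn ((i : ℤ) - 1) t
        = -(lauPairingT p m γ (nn + 1) ((i : ℤ) - 1) t) := by
      rcases Nat.eq_zero_or_pos i with h0 | h0
      · subst h0
        rw [show ((0 : ℕ) : ℤ) - 1 = -1 by norm_num]
        exact lauA_mul_tau m γ nn t hτ
      · obtain ⟨i', rfl⟩ : ∃ i', i = i' + 1 := ⟨i - 1, by omega⟩
        rw [show (((i' + 1 : ℕ)) : ℤ) - 1 = ((i' : ℕ) : ℤ) by push_cast; ring,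
          horth (nn + 1) i' t (by omega), horth nn i' t (by omega), mul_zero, neg_zero]
    have hX2 : Bi * A * lauPairingT p m γ nn (i : ℤ) t
        = lauPairingT p m γ (nn + 1) ((i : ℤ) + 1) t := by
      rcases eq_or_lt_of_le (Nat.lt_succ_iff.mp hi) with h | h
      · subst h
        rw [show ((i : ℕ) : ℤ) + 1 = (((i + 1 : ℕ)) : ℤ) by push_cast; ring]
        exact lauB_inv_mul m γ i t hH hτ
      · rw [show ((i : ℕ) : ℤ) + 1 = (((i + 1 : ℕ)) : ℤ) by push_cast; ring,
          horth nn i t h, horth (nn + 1) (i + 1) t (by omega), mul_zero]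
    rw [hX1, hX2]
    simp only [smul_zero, sub_zero, mul_zero]
    module
  have hR0 : ∀ jj : ℤ, R jj = 0 := by
    apply lau_key m γ hmonic hlow hhigh horth hH t (nn + 1) R hRlow hRhigh
    intro i hi
    have h := hS i hi
    rw [Finset.sum_range_succ, hRhigh (((nn + 1 : ℕ)) : ℤ) le_rfl, zero_mul, add_zero] at h
    exact h
  have h := hR0 j
  rw [← sub_eq_zero]
  calc γd (nn + 1) j t + ((j : ℝ) * α₀) • γ (nn + 1) j t
        - (((((nn + 1 : ℕ)) : ℝ) * α₀) • γ (nn + 1) j t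
            + α₁ • (A * (γ nn (j - 1) t - γ (nn + 1) j t))
            - α₂ • (Bi * A * γ nn j t))
      = R j := by rw [hR]; abel
    _ = 0 := h
end

section
/- Let α₀, α₁, α₂ ∈ ℝ. Let a_n, b_n : ℝ → M be differentiable with a_n(t) and b_n(t) invertible for all n ≥ 1, n ≥ 0 respectively, and let (P_n(·,t))_{n≥0} be monic matrix polynomials with differentiable coefficients. Suppose for all t: the recurrences λ P_0 = P_1 + b_0 P_0 and λ(P_n + a_n P_{n−1}) = P_{n+1} + b_n P_n (n ≥ 1) hold, DP_0 = 0, and the evolution DP_n = n α₀ P_n + α₁ a_n (λ P_{n−1} − P_n) − α₂ b_n^{−1} a_n P_{n−1} holds for n ≥ 1, where (DP_n)(λ,t) := Σ_j (γ_{n,j}′(t) + j α₀ γ_{n,j}(t)) λ^j. Then the recurrence coefficients satisfy the noncommutative nonisospectral mixed relativistic Toda lattice: for all n ≥ 2 and t, a_n′ = α₀ a_n + α₁(−a_{n+1} a_n + a_n a_{n−1} + b_n a_n − a_n b_{n−1}) + α₂(b_n^{−1} a_n − a_n b_{n−1}^{−1}) and b_n′ = α₀ b_n + α₁(b_n a_n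 − a_{n+1} b_n) + α₂(b_{n+1}^{−1} a_{n+1} − a_n b_{n−1}^{−1}). -/
private lemma entryMulDeriv {p : ℕ} {f g : ℝ → Matrix (Fin p) (Fin p) ℝ}
    {f' g' : Matrix (Fin p) (Fin p) ℝ} {t : ℝ}
    (hf : ∀ x y, HasDerivAt (fun s => f s x y) (f' x y) t)
    (hg : ∀ x y, HasDerivAt (fun s => g s x y) (g' x y) t) (x y : Fin p) :
    HasDerivAt (fun s => (f s * g s) x y) ((f' * g t + f t * g') x y) t := by
  have h : HasDerivAt (fun s => ∑ k, f s x k * g s k y)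
      (∑ k, (f' x k * g t k y + f t x k * g' k y)) t :=
    HasDerivAt.fun_sum fun k _ => (hf x k).mul (hg k y)
  have e1 : (fun s => (f s * g s) x y) = fun s => ∑ k, f s x k * g s k y := by
    funext s; rw [Matrix.mul_apply]
  rw [e1]
  convert h using 1
  simp [Matrix.add_apply, Matrix.mul_apply, Finset.sum_add_distrib]

private lemma derivEqOfEq {p : ℕ} {F G : ℝ → Matrix (Fin p) (Fin p) ℝ}
    {F' G' : Matrix (Fin p) (Fin p) ℝ} {t : ℝ}
    (h : ∀ s, F s = G s)
    (hF : ∀ x y, HasDerivAt (fun s => F s x y) (F' x y) t)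
    (hG : ∀ x y, HasDerivAt (fun s => G s x y) (G' x y) t) : F' = G' := by
  ext x y
  have e : (fun s => F s x y) = fun s => G s x y := funext fun s => by rw [h s]
  exact (hF x y).unique (e ▸ hG x y)


/-- compatibility of the three-term recurrence and the
nonisospectral time evolution yields the noncommutative nonisospectral mixed
relativistic Toda lattice for the recurrence coefficients `a_n`, `b_n`.
Monic matrix polynomials are encoded by their coefficients
`γ n j t` (with `γ n n = I`, `γ n j = 0` for `j < 0` or `j > n`), and identities
between matrix polynomials in `λ` are identities between all coefficients. -/
theorem statement7 {p : ℕ} (hp : 1 ≤ p) (α₀ α₁ α₂ : ℝ)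
    (a b a' b' : ℕ → ℝ → Matrix (Fin p) (Fin p) ℝ)
    (ha' : ∀ (n : ℕ) (t : ℝ) (x y : Fin p),
      HasDerivAt (fun s => a n s x y) (a' n t x y) t)
    (hb' : ∀ (n : ℕ) (t : ℝ) (x y : Fin p),
      HasDerivAt (fun s => b n s x y) (b' n t x y) t)
    (haU : ∀ n : ℕ, 1 ≤ n → ∀ t : ℝ, IsUnit (a n t))
    (hbU : ∀ (n : ℕ) (t : ℝ), IsUnit (b n t))
    (γ γd : ℕ → ℤ → ℝ → Matrix (Fin p) (Fin p) ℝ)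
    (hγd : ∀ (n : ℕ) (j : ℤ) (t : ℝ) (x y : Fin p),
      HasDerivAt (fun s => γ n j s x y) (γd n j t x y) t)
    (hmonic : ∀ (n : ℕ) (t : ℝ), γ n (n : ℤ) t = 1)
    (hlow : ∀ (n : ℕ) (j : ℤ) (t : ℝ), j < 0 → γ n j t = 0)
    (hhigh : ∀ (n : ℕ) (j : ℤ) (t : ℝ), (n : ℤ) < j → γ n j t = 0)
    -- the recurrence `λ P_0 = P_1 + b_0 P_0`
    (hrec0 : ∀ (t : ℝ) (j : ℤ), γ 0 (j - 1) t = γ 1 j t + b 0 t * γ 0 j t)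
    -- the recurrence `λ (P_n + a_n P_{n-1}) = P_{n+1} + b_n P_n` for `n ≥ 1`
    (hrec : ∀ n : ℕ, 1 ≤ n → ∀ (t : ℝ) (j : ℤ),
      γ n (j - 1) t + a n t * γ (n - 1) (j - 1) t = γ (n + 1) j t + b n t * γ n j t)
    -- `DP_0 = 0`
    (hev0 : ∀ (t : ℝ) (j : ℤ), γd 0 j t + ((j : ℝ) * α₀) • γ 0 j t = 0)
    -- `DP_n = nα₀ P_n + α₁ a_n (λ P_{n-1} - P_n) - α₂ b_n⁻¹ a_n P_{n-1}` for `n ≥ 1`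
    (hev : ∀ n : ℕ, 1 ≤ n → ∀ (t : ℝ) (j : ℤ),
      γd n j t + ((j : ℝ) * α₀) • γ n j t =
        ((n : ℝ) * α₀) • γ n j t
          + α₁ • (a n t * (γ (n - 1) (j - 1) t - γ n j t))
          - α₂ • ((b n t)⁻¹ * a n t * γ (n - 1) j t)) :
    ∀ n : ℕ, 2 ≤ n → ∀ t : ℝ,
      a' n t = α₀ • a n t
          + α₁ • (-(a (n + 1) t * a n t) + a n t * a (n - 1) t
              + b n t * a n t - a n t * b (n - 1) t)
          + α₂ • ((b n t)⁻¹ * a n t - a n t * (b (n - 1) t)⁻¹) ∧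
      b' n t = α₀ • b n t
          + α₁ • (b n t * a n t - a (n + 1) t * b n t)
          + α₂ • ((b (n + 1) t)⁻¹ * a (n + 1) t - a n t * (b (n - 1) t)⁻¹) := by
  intro n hn t
  -- derivative of constant coefficients vanishes
  have hdconst : ∀ (m : ℕ) (j : ℤ) (c : Matrix (Fin p) (Fin p) ℝ),
      (∀ s : ℝ, γ m j s = c) → γd m j t = 0 := by
    intro m j c hc
    ext x y
    have h1 := hγd m j t x y
    have e : (fun s => γ m j s x y) = fun _ => c x y := funext fun s => by rw [hc s]
    rw [e] at h1
    simpa using h1.unique (hasDerivAt_const t (c x y))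
  -- differentiated recurrence
  have hDj : ∀ j : ℤ,
      γd n (j - 1) t + (a' n t * γ (n - 1) (j - 1) t + a n t * γd (n - 1) (j - 1) t)
        = γd (n + 1) j t + (b' n t * γ n j t + b n t * γd n j t) := by
    intro j
    refine derivEqOfEq (t := t) (fun s => hrec n (by omega) s j) ?_ ?_
    · intro x y
      exact (hγd n (j - 1) t x y).add
        (entryMulDeriv (fun x y => ha' n t x y) (fun x y => hγd (n - 1) (j - 1) t x y) x y)
    · intro x y
      exact (hγd (n + 1) j t x y).add
        (entryMulDeriv (fun x y => hb' n t x y) (fun x y => hγd n j t x y) x y)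
  -- invertibility of γ m 0 t
  have hγ0 : ∀ m : ℕ, 1 ≤ m → IsUnit (γ m 0 t) := by
    intro m hm
    induction m with
    | zero => omega
    | succ k ih =>
      rcases Nat.lt_or_ge k 1 with hk | hk
      · interval_cases k
        have h0 := hrec0 t 0
        rw [hlow 0 (0 - 1) t (by norm_num), (by simpa using hmonic 0 t : γ 0 0 t = 1), mul_one] at h0
        have : γ 1 0 t = -(b 0 t) := by linear_combination (norm := module) -h0
        rw [this]
        exact (hbU 0 t).neg
      · have h0 := hrec k hk t 0
        rw [hlow k (0 - 1) t (by norm_num), hlow (k - 1) (0 - 1) t (by norm_num),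
          mul_zero, add_zero] at h0
        have : γ (k + 1) 0 t = -(b k t * γ k 0 t) := by
          linear_combination (norm := module) -h0
        rw [this]
        exact ((hbU k t).mul (ih hk)).neg
  have hcancel : ∀ X Y : Matrix (Fin p) (Fin p) ℝ,
      X * γ n 0 t = Y * γ n 0 t → X = Y := by
    intro X Y h
    have hu := (Matrix.isUnit_iff_isUnit_det _).mp (hγ0 n (by omega))
    have h2 := congrArg (· * (γ n 0 t)⁻¹) h
    simpa [mul_assoc, Matrix.mul_nonsing_inv _ hu] using h2
  have hn1 : n - 1 + 1 = n := by omega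
  have hbbn : ∀ X : Matrix (Fin p) (Fin p) ℝ, b n t * ((b n t)⁻¹ * X) = X := fun X => by
    rw [← mul_assoc, Matrix.mul_nonsing_inv _ ((Matrix.isUnit_iff_isUnit_det _).mp (hbU n t)),
      one_mul]
  ------------------------------------------------------------------
  -- the `b` equation, from coefficients at `j = 0`
  ------------------------------------------------------------------
  -- γ (n+1) 0 = -(b n * γ n 0)
  have hr1 := hrec n (by omega) t 0
  rw [hlow n (0 - 1) t (by norm_num), hlow (n - 1) (0 - 1) t (by norm_num),
    mul_zero, add_zero] at hr1
  have hgp : γ (n + 1) 0 t = -(b n t * γ n 0 t) := by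
    linear_combination (norm := module) -hr1
  -- γ (n-1) 0 = -(b(n-1)⁻¹ * γ n 0)
  have hr2 := hrec (n - 1) (by omega) t 0
  rw [hlow (n - 1) (0 - 1) t (by norm_num), hlow (n - 1 - 1) (0 - 1) t (by norm_num),
    mul_zero, add_zero, hn1] at hr2
  have hgmraw : γ n 0 t = -(b (n - 1) t * γ (n - 1) 0 t) := by
    linear_combination (norm := module) -hr2
  have hgm : γ (n - 1) 0 t = -((b (n - 1) t)⁻¹ * γ n 0 t) := by
    rw [hgmraw, mul_neg, ← mul_assoc,
      Matrix.nonsing_inv_mul _ ((Matrix.isUnit_iff_isUnit_det _).mp (hbU (n - 1) t)),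
      one_mul, neg_neg]
  -- evolution equations at j = 0
  have e1 := hev (n + 1) (by omega) t 0
  rw [Nat.add_sub_cancel, hlow n (0 - 1) t (by norm_num)] at e1
  have e1' : γd (n + 1) 0 t =
      (((n + 1 : ℕ) : ℝ) * α₀) • γ (n + 1) 0 t
        + α₁ • (a (n + 1) t * (0 - γ (n + 1) 0 t))
        - α₂ • ((b (n + 1) t)⁻¹ * a (n + 1) t * γ n 0 t) := by
    push_cast at e1
    linear_combination (norm := module) e1
  have e2 := hev n (by omega) t 0
  rw [hlow (n - 1) (0 - 1) t (by norm_num)] at e2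
  have e2' : γd n 0 t =
      (((n : ℕ) : ℝ) * α₀) • γ n 0 t
        + α₁ • (a n t * (0 - γ n 0 t))
        - α₂ • ((b n t)⁻¹ * a n t * γ (n - 1) 0 t) := by
    push_cast at e2
    linear_combination (norm := module) e2
  -- differentiated recurrence at j = 0
  have hD0 := hDj 0
  rw [hlow (n - 1) (0 - 1) t (by norm_num),
    hdconst n (0 - 1) 0 (fun s => hlow n (0 - 1) s (by norm_num)),
    hdconst (n - 1) (0 - 1) 0 (fun s => hlow (n - 1) (0 - 1) s (by norm_num)),
    mul_zero, mul_zero, add_zero, zero_add] at hD0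
  -- substitute
  rw [e1', e2', hgp, hgm] at hD0
  -- now hD0 : 0 = [...stuff...]; normalize and conclude
  have hmain : b' n t * γ n 0 t =
      (α₀ • b n t + α₁ • (b n t * a n t - a (n + 1) t * b n t)
        + α₂ • ((b (n + 1) t)⁻¹ * a (n + 1) t - a n t * (b (n - 1) t)⁻¹)) * γ n 0 t := by
    simp only [zero_sub, mul_neg, neg_mul, mul_add, add_mul, sub_mul, mul_sub,
      smul_mul_assoc, mul_smul_comm, mul_assoc, smul_neg, neg_neg, mul_one,
      mul_zero, zero_mul, add_zero, zero_add, sub_zero] at hD0 ⊢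
    simp only [hbbn] at hD0
    linear_combination (norm := module) -hD0
  have hbfinal : b' n t = α₀ • b n t
      + α₁ • (b n t * a n t - a (n + 1) t * b n t)
      + α₂ • ((b (n + 1) t)⁻¹ * a (n + 1) t - a n t * (b (n - 1) t)⁻¹) :=
    hcancel _ _ hmain
  refine ⟨?_, hbfinal⟩
  ------------------------------------------------------------------
  -- the `a` equation, from coefficients at `j = n`
  ------------------------------------------------------------------
  have hm1 : γ (n - 1) ((n : ℤ) - 1) t = 1 := by
    have h := hmonic (n - 1) t
    rwa [show ((n - 1 : ℕ) : ℤ) = (n : ℤ) - 1 by omega] at h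
  have hm2 : γ (n - 1 - 1) ((n : ℤ) - 1 - 1) t = 1 := by
    have h := hmonic (n - 1 - 1) t
    rwa [show ((n - 1 - 1 : ℕ) : ℤ) = (n : ℤ) - 1 - 1 by omega] at h
  have hdm : γd (n - 1) ((n : ℤ) - 1) t = 0 :=
    hdconst (n - 1) ((n : ℤ) - 1) 1 fun s => by
      rw [show ((n : ℤ) - 1) = ((n - 1 : ℕ) : ℤ) by omega]; exact hmonic (n - 1) s
  have hdn : γd n (n : ℤ) t = 0 := hdconst n (n : ℤ) 1 fun s => hmonic n s
  -- differentiated recurrence at j = n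
  have hDn := hDj (n : ℤ)
  rw [hm1, hdm, hmonic n t, hdn, mul_one, mul_zero, add_zero, mul_zero, add_zero, mul_one] at hDn
  -- hDn : γd n (n-1) t + a' n t = γd (n+1) n t + b' n t
  -- recurrence at top coefficients
  have hrn := hrec n (by omega) t (n : ℤ)
  rw [hm1, mul_one, hmonic n t, mul_one] at hrn
  have hup : γ (n + 1) (n : ℤ) t = γ n ((n : ℤ) - 1) t + a n t - b n t := by
    linear_combination (norm := module) -hrn
  have hrm := hrec (n - 1) (by omega) t ((n : ℤ) - 1)
  rw [hm2, mul_one, hn1, hm1, mul_one] at hrm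
  have hum : γ (n - 1) ((n : ℤ) - 1 - 1) t
      = γ n ((n : ℤ) - 1) t + b (n - 1) t - a (n - 1) t := by
    linear_combination (norm := module) hrm
  -- evolution equations
  have eU := hev n (by omega) t ((n : ℤ) - 1)
  rw [hm1, mul_one, hum] at eU
  have eUp := hev (n + 1) (by omega) t (n : ℤ)
  rw [Nat.add_sub_cancel, hmonic n t, mul_one, hup] at eUp
  -- expand products over sums in eU, eUp and finish
  simp only [mul_add, mul_sub, add_mul, sub_mul, mul_one] at eU eUp
  push_cast at eU eUp hDn ⊢
  linear_combination (norm := module) hDn + eUp - eU + hbfinal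
end

section
/- Let K ∈ M be a fixed matrix and let m_j : ℝ → M (j ∈ ℤ) be differentiable moments satisfying m_j′(t) = m_j(t) K for all j, t. Assume that for every n ≥ 1 and t the block moment matrix Λ_{n−1}(t) is invertible, and that H_n(t) and τ_n(t) are invertible for every n ≥ 0 and t. Then the recurrence coefficients a_n(t) := −τ_n(t)τ_{n−1}(t)^{−1} and b_n(t) := a_n(t)H_{n−1}(t)H_n(t)^{−1}, as well as every polynomial coefficient γ_{n,j}(t) := −(θ_n(t)Λ_{n−1}(t)^{−1})_j (the j-th p×p block, 0 ≤ j ≤ n−1), have vanishing time derivative: a_n′(t) = 0, b_n′(t) = 0 and γ_{n,j}′(t) = 0 for all t. -/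
open NormedSpace

attribute [local instance] Matrix.linftyOpNormedAddCommGroup Matrix.linftyOpNormedRing
  Matrix.linftyOpNormedSpace Matrix.linftyOpNormedAlgebra


/-- `H_0 := m_0` and `H_n := m_0 - θ_n Λ_{n-1}⁻¹ col(m_{-n}, …, m_{-1})` for `n ≥ 1`. -/
noncomputable def Hqd (p : ℕ) (m : ℤ → Matrix (Fin p) (Fin p) ℝ) :
    ℕ → Matrix (Fin p) (Fin p) ℝ
  | 0 => m 0
  | (n + 1) => m 0 - blockTheta p (n + 1) m * (blockLam p (n + 1) m)⁻¹ *
      blockCol p (n + 1) (-((n : ℤ) + 1)) m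

/-- `τ_0 := m_1` and `τ_n := m_{n+1} - θ_n Λ_{n-1}⁻¹ col(m_1, …, m_n)` for `n ≥ 1`. -/
noncomputable def tauqd (p : ℕ) (m : ℤ → Matrix (Fin p) (Fin p) ℝ) :
    ℕ → Matrix (Fin p) (Fin p) ℝ
  | 0 => m 1
  | (n + 1) => m ((n : ℤ) + 2) - blockTheta p (n + 1) m * (blockLam p (n + 1) m)⁻¹ *
      blockCol p (n + 1) 1 m

/-- `a_n := -τ_n τ_{n-1}⁻¹`. -/
noncomputable def aqd (p : ℕ) (m : ℤ → Matrix (Fin p) (Fin p) ℝ) (n : ℕ) :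
    Matrix (Fin p) (Fin p) ℝ :=
  -(tauqd p m n) * (tauqd p m (n - 1))⁻¹

/-- `b_n := a_n H_{n-1} H_n⁻¹`. -/
noncomputable def bqd (p : ℕ) (m : ℤ → Matrix (Fin p) (Fin p) ℝ) (n : ℕ) :
    Matrix (Fin p) (Fin p) ℝ :=
  aqd p m n * Hqd p m (n - 1) * (Hqd p m n)⁻¹

section Calc

variable {p q : ℕ}

/-- Entrywise derivatives give a matrix-valued derivative. -/
theorem hasDerivAt_matrix {f : ℝ → Matrix (Fin p) (Fin q) ℝ}
    {f' : Matrix (Fin p) (Fin q) ℝ} {t : ℝ}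
    (h : ∀ x y, HasDerivAt (fun s => f s x y) (f' x y) t) :
    HasDerivAt f f' t := by
  have h1 : HasDerivAt (fun s => ∑ x : Fin p, ∑ y : Fin q,
      (f s x y) • Matrix.single x y (1 : ℝ))
      (∑ x : Fin p, ∑ y : Fin q, (f' x y) • Matrix.single x y (1 : ℝ)) t := by
    refine HasDerivAt.fun_sum fun x _ => HasDerivAt.fun_sum fun y _ => ?_
    exact (h x y).smul_const _
  have e1 : ∀ (g : Matrix (Fin p) (Fin q) ℝ),
      (∑ x : Fin p, ∑ y : Fin q, (g x y) • Matrix.single x y (1 : ℝ)) = g := by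
    intro g
    conv_rhs => rw [Matrix.matrix_eq_sum_single g]
    refine Finset.sum_congr rfl fun x _ => Finset.sum_congr rfl fun y _ => ?_
    rw [Matrix.smul_single, smul_eq_mul, mul_one]
  have : (fun s => ∑ x : Fin p, ∑ y : Fin q,
      (f s x y) • Matrix.single x y (1 : ℝ)) = f := by
    funext s; exact e1 (f s)
  rwa [this, e1] at h1

/-- Solution of the moment ODE. -/
theorem moment_sol {K : Matrix (Fin p) (Fin p) ℝ} {m : ℤ → ℝ → Matrix (Fin p) (Fin p) ℝ}
    (hm : ∀ (j : ℤ) (t : ℝ) (x y : Fin p),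
      HasDerivAt (fun s => m j s x y) ((m j t * K) x y) t)
    (j : ℤ) (t : ℝ) :
    m j t = m j 0 * exp (t • K) := by
  have hcomm : ∀ s : ℝ, K * exp (s • K) = exp (s • K) * K := fun s =>
    (((Commute.refl K).smul_right s).exp_right).eq
  have hEd : ∀ s : ℝ, HasDerivAt (fun u : ℝ => exp ((-u) • K))
      (-(exp ((-s) • K) * K)) s := by
    intro s
    have h1 := hasDerivAt_exp_smul_const (𝕂 := ℝ) K (-s)
    have h2 : HasDerivAt (fun u : ℝ => -u) (-1 : ℝ) s := (hasDerivAt_id s).neg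
    have := HasDerivAt.scomp s h1 h2
    simp only [Function.comp_def, neg_smul, one_smul] at this
    simp only [neg_smul]
    exact this
  set g : ℝ → Matrix (Fin p) (Fin p) ℝ := fun s => m j s * exp ((-s) • K) with hg
  have hgd : ∀ s : ℝ, HasDerivAt g 0 s := by
    intro s
    have hmd : HasDerivAt (fun u => m j u) (m j s * K) s := hasDerivAt_matrix (hm j s)
    have := hmd.mul (hEd s)
    have hz : m j s * K * exp ((-s) • K) + m j s * -(exp ((-s) • K) * K) = 0 := by
      rw [mul_assoc, hcomm (-s), mul_neg, ← mul_assoc, add_neg_cancel]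
    rwa [hz] at this
  have hconst : g t = g 0 := by
    have hdiff : Differentiable ℝ g := fun s => (hgd s).differentiableAt
    refine is_const_of_fderiv_eq_zero hdiff (fun s => ?_) t 0
    have := (hgd s).hasFDerivAt
    have h0 : ContinuousLinearMap.toSpanSingleton ℝ
        (0 : Matrix (Fin p) (Fin p) ℝ) = 0 := by ext; simp
    rw [h0] at this
    exact this.fderiv
  have hinv : exp ((-t) • K) * exp (t • K) = 1 := by
    rw [← Matrix.exp_add_of_commute _ _ (((Commute.refl K).smul_left (-t)).smul_right t)]
    rw [← add_smul, neg_add_cancel, zero_smul, exp_zero]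
  have : g t * exp (t • K) = m j t := by
    rw [hg]; rw [mul_assoc, hinv, mul_one]
  rw [← this, hconst, hg]
  simp [exp_zero]

end Calc

section Algebra

variable {p n : ℕ}

/-- Block diagonal matrix with constant diagonal block `E`. -/
noncomputable def blockDiagE (p n : ℕ) (E : Matrix (Fin p) (Fin p) ℝ) :
    Matrix (Fin n × Fin p) (Fin n × Fin p) ℝ :=
  Matrix.of fun kx ly => if kx.1 = ly.1 then E kx.2 ly.2 else 0

theorem blockDiagE_mul (A B : Matrix (Fin p) (Fin p) ℝ) :
    blockDiagE p n A * blockDiagE p n B = blockDiagE p n (A * B) := by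
  ext ⟨k, x⟩ ⟨l, y⟩
  simp only [blockDiagE, Matrix.mul_apply, Matrix.of_apply, Fintype.sum_prod_type]
  rcases eq_or_ne k l with rfl | hkl
  · simp [Finset.sum_ite_eq, Matrix.mul_apply]
  · simp [hkl, Finset.sum_ite_eq, ite_eq_right_iff]

theorem blockDiagE_one : blockDiagE p n (1 : Matrix (Fin p) (Fin p) ℝ) = 1 := by
  ext ⟨k, x⟩ ⟨l, y⟩
  simp only [blockDiagE, Matrix.of_apply, Matrix.one_apply, Prod.mk.injEq]
  by_cases hkl : k = l <;> by_cases hxy : x = y <;> simp [hkl, hxy, Matrix.one_apply]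

theorem blockLam_mul {m1 m0 : ℤ → Matrix (Fin p) (Fin p) ℝ}
    {E : Matrix (Fin p) (Fin p) ℝ} (h : ∀ j, m1 j = m0 j * E) :
    blockLam p n m1 = blockLam p n m0 * blockDiagE p n E := by
  ext ⟨k, x⟩ ⟨l, y⟩
  simp only [blockLam, blockDiagE, Matrix.mul_apply, Matrix.of_apply, Fintype.sum_prod_type,
    mul_ite, mul_zero]
  rw [Finset.sum_comm]
  simp [h, Matrix.mul_apply, Finset.mul_sum]

theorem blockTheta_mul {m1 m0 : ℤ → Matrix (Fin p) (Fin p) ℝ}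
    {E : Matrix (Fin p) (Fin p) ℝ} (h : ∀ j, m1 j = m0 j * E) :
    blockTheta p n m1 = blockTheta p n m0 * blockDiagE p n E := by
  ext x ⟨l, y⟩
  simp only [blockTheta, blockDiagE, Matrix.mul_apply, Matrix.of_apply, Fintype.sum_prod_type,
    mul_ite, mul_zero]
  rw [Finset.sum_comm]
  simp [h, Matrix.mul_apply]

theorem blockCol_mul {m1 m0 : ℤ → Matrix (Fin p) (Fin p) ℝ}
    {E : Matrix (Fin p) (Fin p) ℝ} (h : ∀ j, m1 j = m0 j * E) (r : ℤ) :
    blockCol p n r m1 = blockCol p n r m0 * E := by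
  ext ⟨k, x⟩ y
  simp [blockCol, Matrix.mul_apply, h]

end Algebra

/-- if the moments satisfy `m_j' = m_j K`, then the recurrence
coefficients `a_n(t)`, `b_n(t)` and all polynomial coefficients `γ_{n,j}(t)`
have vanishing time derivative. -/
theorem statement9 {p : ℕ} (hp : 1 ≤ p)
    (K : Matrix (Fin p) (Fin p) ℝ)
    (m : ℤ → ℝ → Matrix (Fin p) (Fin p) ℝ)
    (hm : ∀ (j : ℤ) (t : ℝ) (x y : Fin p),
      HasDerivAt (fun s => m j s x y) ((m j t * K) x y) t)
    (hΛ : ∀ n : ℕ, 1 ≤ n → ∀ t : ℝ, IsUnit (blockLam p n (fun j => m j t)))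
    (hH : ∀ (n : ℕ) (t : ℝ), IsUnit (Hqd p (fun j => m j t) n))
    (hτ : ∀ (n : ℕ) (t : ℝ), IsUnit (tauqd p (fun j => m j t) n)) :
    (∀ n : ℕ, 1 ≤ n → ∀ (t : ℝ) (x y : Fin p),
      HasDerivAt (fun s => aqd p (fun j => m j s) n x y) 0 t ∧
      HasDerivAt (fun s => bqd p (fun j => m j s) n x y) 0 t) ∧
    (∀ n : ℕ, 1 ≤ n → ∀ (j : Fin n) (t : ℝ) (x y : Fin p),
      HasDerivAt (fun s => gammaQD p n (fun i => m i s) j x y) 0 t) := by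
  have hsol : ∀ (j : ℤ) (t : ℝ), m j t = m j 0 * exp (t • K) := fun j t => moment_sol hm j t
  set E : ℝ → Matrix (Fin p) (Fin p) ℝ := fun s => exp (s • K) with hE
  have hEmul : ∀ s u : ℝ, E s * E u = E (s + u) := by
    intro s u
    rw [hE]
    dsimp only
    rw [← Matrix.exp_add_of_commute _ _ (((Commute.refl K).smul_left s).smul_right u), add_smul]
  have hEE : ∀ s : ℝ, E s * E (-s) = 1 := by
    intro s
    rw [hEmul, add_neg_cancel, hE]
    dsimp only
    rw [zero_smul, exp_zero]
  have hEinv : ∀ s : ℝ, (E s)⁻¹ = E (-s) := fun s =>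
    Matrix.inv_eq_right_inv (hEE s)
  have hsolE : ∀ (j : ℤ) (s : ℝ), m j s = m j 0 * E s := fun j s => hsol j s
  have hsand : ∀ (A B : Matrix (Fin p) (Fin p) ℝ) (s : ℝ),
      (A * E s) * (E (-s) * B) = A * B := by
    intro A B s
    rw [mul_assoc, ← mul_assoc (E s), hEE, one_mul]
  have hD : ∀ (n : ℕ) (s : ℝ),
      (blockDiagE p n (E s))⁻¹ = blockDiagE p n (E (-s)) := by
    intro n s
    exact Matrix.inv_eq_right_inv (by rw [blockDiagE_mul, hEE, blockDiagE_one])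
  have hγkey : ∀ (n : ℕ) (s : ℝ),
      blockTheta p n (fun j => m j s) * (blockLam p n (fun j => m j s))⁻¹ =
      blockTheta p n (fun j => m j 0) * (blockLam p n (fun j => m j 0))⁻¹ := by
    intro n s
    rw [blockTheta_mul (fun j => hsolE j s), blockLam_mul (fun j => hsolE j s),
      Matrix.mul_inv_rev, hD, Matrix.mul_assoc,
      ← Matrix.mul_assoc (blockDiagE p n (E s)) (blockDiagE p n (E (-s)))
        ((blockLam p n (fun j => m j 0))⁻¹),
      blockDiagE_mul, hEE, blockDiagE_one, Matrix.one_mul]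
  have hHa : ∀ (k : ℕ) (s : ℝ),
      Hqd p (fun j => m j s) k = Hqd p (fun j => m j 0) k * E s := by
    intro k s
    cases k with
    | zero => simpa [Hqd] using hsolE 0 s
    | succ n =>
      simp only [Hqd]
      rw [hsolE 0 s, hγkey (n + 1) s, blockCol_mul (fun j => hsolE j s) _, sub_mul,
        ← Matrix.mul_assoc
          (blockTheta p (n + 1) (fun j => m j 0) * (blockLam p (n + 1) (fun j => m j 0))⁻¹)
          (blockCol p (n + 1) (-((n : ℤ) + 1)) (fun j => m j 0)) (E s)]
  have hτa : ∀ (k : ℕ) (s : ℝ),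
      tauqd p (fun j => m j s) k = tauqd p (fun j => m j 0) k * E s := by
    intro k s
    cases k with
    | zero => simpa [tauqd] using hsolE 1 s
    | succ n =>
      simp only [tauqd]
      rw [hsolE ((n : ℤ) + 2) s, hγkey (n + 1) s, blockCol_mul (fun j => hsolE j s) _, sub_mul,
        ← Matrix.mul_assoc
          (blockTheta p (n + 1) (fun j => m j 0) * (blockLam p (n + 1) (fun j => m j 0))⁻¹)
          (blockCol p (n + 1) 1 (fun j => m j 0)) (E s)]
  have haconst : ∀ (k : ℕ) (s : ℝ),
      aqd p (fun j => m j s) k = aqd p (fun j => m j 0) k := by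
    intro k s
    unfold aqd
    rw [hτa k s, hτa (k - 1) s, Matrix.mul_inv_rev, hEinv, neg_mul, neg_mul, hsand]
  have hbconst : ∀ (k : ℕ) (s : ℝ),
      bqd p (fun j => m j s) k = bqd p (fun j => m j 0) k := by
    intro k s
    unfold bqd
    rw [haconst k s, hHa (k - 1) s, hHa k s, Matrix.mul_inv_rev, hEinv,
      mul_assoc (aqd p (fun j => m j 0) k), hsand,
      mul_assoc (aqd p (fun j => m j 0) k)]
  have hγconst : ∀ (n : ℕ) (j : Fin n) (s : ℝ),
      gammaQD p n (fun i => m i s) j = gammaQD p n (fun i => m i 0) j := by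
    intro n j s
    unfold gammaQD
    rw [hγkey n s]
  refine ⟨fun n _ t x y => ⟨?_, ?_⟩, fun n _ j t x y => ?_⟩
  · have h1 : (fun s => aqd p (fun j => m j s) n x y) =
        fun _ => aqd p (fun j => m j 0) n x y := funext fun s => by rw [haconst n s]
    have := hasDerivAt_const t (aqd p (fun j => m j 0) n x y)
    rwa [← h1] at this
  · have h1 : (fun s => bqd p (fun j => m j s) n x y) =
        fun _ => bqd p (fun j => m j 0) n x y := funext fun s => by rw [hbconst n s]
    have := hasDerivAt_const t (bqd p (fun j => m j 0) n x y)
    rwa [← h1] at this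
  · have h1 : (fun s => gammaQD p n (fun i => m i s) j x y) =
        fun _ => gammaQD p n (fun i => m i 0) j x y := funext fun s => by rw [hγconst n j s]
    have := hasDerivAt_const t (gammaQD p n (fun i => m i 0) j x y)
    rwa [← h1] at this
end

section
/- Let K ∈ M be a fixed matrix and let m_j : ℝ → M (j ∈ ℤ) be differentiable moments satisfying m_j′(t) = m_j(t) K for all j, t. Assume that for every n ≥ 1 and t the block moment matrix Λ_{n−1}(t) is invertible. Then the quasideterminants H_n(t) := m_0(t) − θ_n(t)Λ_{n−1}(t)^{−1}col(m_{−n}, …, m_{−1})(t) and τ_n(t) := m_{n+1}(t) − θ_n(t)Λ_{n−1}(t)^{−1}col(m_1, …, m_n)(t) satisfy H_n′(t) = H_n(t) K and τ_n′(t) = τ_n(t) K for all n ≥ 1 and t. -/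
/-- The quasideterminant `H_n(t) = m_0(t) - θ_n(t) Λ_{n-1}(t)⁻¹ col(m_{-n},…,m_{-1})(t)`
for `n ≥ 1`. -/
noncomputable def Hexpr (p n : ℕ) (m : ℤ → Matrix (Fin p) (Fin p) ℝ) :
    Matrix (Fin p) (Fin p) ℝ :=
  m 0 - blockTheta p n m * (blockLam p n m)⁻¹ * blockCol p n (-(n : ℤ)) m

/-- The quasideterminant `τ_n(t) = m_{n+1}(t) - θ_n(t) Λ_{n-1}(t)⁻¹ col(m_1,…,m_n)(t)`
for `n ≥ 1`. -/
noncomputable def tauexpr (p n : ℕ) (m : ℤ → Matrix (Fin p) (Fin p) ℝ) :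
    Matrix (Fin p) (Fin p) ℝ :=
  m ((n : ℤ) + 1) - blockTheta p n m * (blockLam p n m)⁻¹ * blockCol p n 1 m

open Finset

section aux
variable {ι κ τ : Type*} [Fintype ι] [Fintype κ] [Fintype τ] [DecidableEq ι] {t : ℝ}

/-- entrywise product rule -/
lemma entry_mul_deriv {A : ℝ → Matrix ι κ ℝ} {B : ℝ → Matrix κ τ ℝ}
    {A' : Matrix ι κ ℝ} {B' : Matrix κ τ ℝ}
    (hA : ∀ x y, HasDerivAt (fun s => A s x y) (A' x y) t)
    (hB : ∀ x y, HasDerivAt (fun s => B s x y) (B' x y) t)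
    (x : ι) (y : τ) :
    HasDerivAt (fun s => (A s * B s) x y) ((A' * B t + A t * B') x y) t := by
  simp only [Matrix.mul_apply, Matrix.add_apply, ← Finset.sum_add_distrib]
  exact HasDerivAt.fun_sum fun k _ => (hA x k).mul (hB k y)

lemma det_diff {B : ℝ → Matrix ι ι ℝ}
    (hB : ∀ x y, DifferentiableAt ℝ (fun s => B s x y) t) :
    DifferentiableAt ℝ (fun s => (B s).det) t := by
  simp only [Matrix.det_apply']
  refine DifferentiableAt.fun_sum fun σ _ => DifferentiableAt.const_mul ?_ _
  exact (HasDerivAt.fun_finsetProd (fun i _ => ((hB (σ i) i).hasDerivAt))).differentiableAt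

lemma adj_diff {B : ℝ → Matrix ι ι ℝ}
    (hB : ∀ x y, DifferentiableAt ℝ (fun s => B s x y) t) (x y : ι) :
    DifferentiableAt ℝ (fun s => (B s).adjugate x y) t := by
  simp only [Matrix.adjugate_apply]
  refine det_diff fun a b => ?_
  simp only [Matrix.updateRow_apply]
  split_ifs
  · exact differentiableAt_const _
  · exact hB a b

lemma inv_entry_diff {B : ℝ → Matrix ι ι ℝ}
    (hu : ∀ s, IsUnit (B s))
    (hB : ∀ x y, DifferentiableAt ℝ (fun s => B s x y) t) (x y : ι) :
    DifferentiableAt ℝ (fun s => (B s)⁻¹ x y) t := by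
  simp only [Matrix.inv_def, Matrix.smul_apply, Ring.inverse_eq_inv', smul_eq_mul]
  have hne : (B t).det ≠ 0 := by
    have := (Matrix.isUnit_iff_isUnit_det (B t)).mp (hu t)
    exact this.ne_zero
  exact ((det_diff hB).inv hne).mul (adj_diff hB x y)

/-- derivative of the entries of the inverse -/
lemma inv_entry_deriv {B : ℝ → Matrix ι ι ℝ} {B' : Matrix ι ι ℝ}
    (hu : ∀ s, IsUnit (B s))
    (hB : ∀ x y, HasDerivAt (fun s => B s x y) (B' x y) t) (x y : ι) :
    HasDerivAt (fun s => (B s)⁻¹ x y) ((-((B t)⁻¹ * B' * (B t)⁻¹)) x y) t := by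
  have hdiff : ∀ x y, DifferentiableAt ℝ (fun s => (B s)⁻¹ x y) t :=
    inv_entry_diff hu (fun a b => (hB a b).differentiableAt)
  set C : Matrix ι ι ℝ := Matrix.of fun x y => deriv (fun s => (B s)⁻¹ x y) t with hC
  have hCd : ∀ x y, HasDerivAt (fun s => (B s)⁻¹ x y) (C x y) t := fun a b =>
    (hdiff a b).hasDerivAt
  have hprod : ∀ a b, HasDerivAt (fun s => (B s * (B s)⁻¹) a b)
      ((B' * (B t)⁻¹ + B t * C) a b) t := entry_mul_deriv hB hCd
  have hconst : ∀ a b, (fun s => (B s * (B s)⁻¹) a b) = fun _ => (1 : Matrix ι ι ℝ) a b := by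
    intro a b; funext s; rw [Matrix.mul_nonsing_inv _ ((Matrix.isUnit_iff_isUnit_det _).mp (hu s))]
  have hzero : B' * (B t)⁻¹ + B t * C = 0 := by
    ext a b
    have h1 := hprod a b
    rw [hconst a b] at h1
    have h2 : HasDerivAt (fun _ : ℝ => (1 : Matrix ι ι ℝ) a b) 0 t := hasDerivAt_const _ _
    simpa using h1.unique h2
  have hBinv : (B t)⁻¹ * B t = 1 := Matrix.nonsing_inv_mul _ ((Matrix.isUnit_iff_isUnit_det _).mp (hu t))
  have hCeq : C = -((B t)⁻¹ * B' * (B t)⁻¹) := by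
    have : B t * C = -(B' * (B t)⁻¹) := by
      rw [eq_neg_iff_add_eq_zero, add_comm]; exact hzero
    calc C = ((B t)⁻¹ * B t) * C := by rw [hBinv, one_mul]
      _ = (B t)⁻¹ * (B t * C) := by rw [Matrix.mul_assoc]
      _ = -((B t)⁻¹ * B' * (B t)⁻¹) := by rw [this, Matrix.mul_neg, Matrix.mul_assoc]
  rw [← hCeq]; exact hCd x y
end aux


noncomputable def blockDiagK (p n : ℕ) (K : Matrix (Fin p) (Fin p) ℝ) :
    Matrix (Fin n × Fin p) (Fin n × Fin p) ℝ :=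
  Matrix.of fun a b => if a.1 = b.1 then K a.2 b.2 else 0

lemma mul_blockDiagK {p n : ℕ} {K : Matrix (Fin p) (Fin p) ℝ} {ι : Type*} [Fintype ι]
    (M : Matrix ι (Fin n × Fin p) ℝ) (a : ι) (l : Fin n) (y : Fin p) :
    (M * blockDiagK p n K) a (l, y) = ∑ z, M a (l, z) * K z y := by
  simp only [Matrix.mul_apply, blockDiagK, Matrix.of_apply, Fintype.sum_prod_type,
    mul_ite, mul_zero]
  rw [Finset.sum_eq_single l]
  · simp
  · intro b _ h; simp [h]
  · simp

/-- key computation shared by `H` and `τ` -/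
lemma key_deriv {p n : ℕ} (hn : 1 ≤ n) (K : Matrix (Fin p) (Fin p) ℝ)
    (m : ℤ → ℝ → Matrix (Fin p) (Fin p) ℝ)
    (hm : ∀ (j : ℤ) (t : ℝ) (x y : Fin p),
      HasDerivAt (fun s => m j s x y) ((m j t * K) x y) t)
    (hu : ∀ t : ℝ, IsUnit (blockLam p n (fun j => m j t)))
    (a r : ℤ) (t : ℝ) (x y : Fin p) :
    HasDerivAt (fun s => (m a s - blockTheta p n (fun j => m j s) *
        (blockLam p n (fun j => m j s))⁻¹ * blockCol p n r (fun j => m j s)) x y)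
      (((m a t - blockTheta p n (fun j => m j t) *
        (blockLam p n (fun j => m j t))⁻¹ * blockCol p n r (fun j => m j t)) * K) x y) t := by
  set Θ : ℝ → Matrix (Fin p) (Fin n × Fin p) ℝ := fun s => blockTheta p n (fun j => m j s) with hΘdef
  set Λ : ℝ → Matrix (Fin n × Fin p) (Fin n × Fin p) ℝ := fun s => blockLam p n (fun j => m j s)
  set C : ℝ → Matrix (Fin n × Fin p) (Fin p) ℝ := fun s => blockCol p n r (fun j => m j s)
  set Dk := blockDiagK p n K
  have hΘ : ∀ x b, HasDerivAt (fun s => Θ s x b) ((Θ t * Dk) x b) t := by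
    rintro x ⟨l, z⟩
    have h2 : (Θ t * Dk) x (l, z) = (m ((n : ℤ) - l) t * K) x z := by
      rw [mul_blockDiagK]; simp [hΘdef, blockTheta, Matrix.mul_apply]
    rw [h2]; exact hm _ t x z
  have hΛ : ∀ b c, HasDerivAt (fun s => Λ s b c) ((Λ t * Dk) b c) t := by
    rintro ⟨k, x⟩ ⟨l, z⟩
    have h2 : (Λ t * Dk) (k, x) (l, z) = (m ((k : ℤ) - l) t * K) x z := by
      rw [mul_blockDiagK]; simp [Λ, blockLam, Matrix.mul_apply]
    rw [h2]; exact hm _ t x z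
  have hC : ∀ b z, HasDerivAt (fun s => C s b z) ((C t * K) b z) t := by
    rintro ⟨j, x⟩ z
    have h2 : (C t * K) (j, x) z = (m (r + j) t * K) x z := by
      simp [C, blockCol, Matrix.mul_apply]
    rw [h2]; exact hm _ t x z
  have hInv : ∀ b c, HasDerivAt (fun s => (Λ s)⁻¹ b c)
      ((-((Λ t)⁻¹ * (Λ t * Dk) * (Λ t)⁻¹)) b c) t := inv_entry_deriv hu hΛ
  have hTI : ∀ x b, HasDerivAt (fun s => (Θ s * (Λ s)⁻¹) x b)
      ((Θ t * Dk * (Λ t)⁻¹ + Θ t * -((Λ t)⁻¹ * (Λ t * Dk) * (Λ t)⁻¹)) x b) t :=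
    entry_mul_deriv hΘ hInv
  have hTIC : ∀ x z, HasDerivAt (fun s => (Θ s * (Λ s)⁻¹ * C s) x z)
      (((Θ t * Dk * (Λ t)⁻¹ + Θ t * -((Λ t)⁻¹ * (Λ t * Dk) * (Λ t)⁻¹)) * C t
        + Θ t * (Λ t)⁻¹ * (C t * K)) x z) t := entry_mul_deriv hTI hC
  have h1 : (Λ t)⁻¹ * (Λ t * Dk) * (Λ t)⁻¹ = Dk * (Λ t)⁻¹ := by
    rw [← Matrix.mul_assoc,
      Matrix.nonsing_inv_mul _ ((Matrix.isUnit_iff_isUnit_det _).mp (hu t)), Matrix.one_mul]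
  have hfinal : (m a t * K) - ((Θ t * Dk * (Λ t)⁻¹ + Θ t * -((Λ t)⁻¹ * (Λ t * Dk) * (Λ t)⁻¹)) * C t
        + Θ t * (Λ t)⁻¹ * (C t * K))
      = (m a t - Θ t * (Λ t)⁻¹ * C t) * K := by
    rw [h1]
    simp only [Matrix.mul_neg, ← Matrix.mul_assoc, add_neg_cancel, Matrix.zero_mul, zero_add,
      Matrix.sub_mul]
  have := fun x y => ((hm a t x y).sub (hTIC x y))
  simp only [Matrix.sub_apply] at this ⊢
  rw [show ((m a t - Θ t * (Λ t)⁻¹ * C t) * K) x y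
      = ((m a t * K) - ((Θ t * Dk * (Λ t)⁻¹ + Θ t * -((Λ t)⁻¹ * (Λ t * Dk) * (Λ t)⁻¹)) * C t
        + Θ t * (Λ t)⁻¹ * (C t * K))) x y by rw [hfinal]]
  simp only [Matrix.sub_apply]
  exact this x y

/-- if the moments satisfy `m_j' = m_j K`, then the
quasideterminants `H_n` and `τ_n` satisfy `H_n' = H_n K` and `τ_n' = τ_n K`. -/
theorem statement10 {p : ℕ} (hp : 1 ≤ p)
    (K : Matrix (Fin p) (Fin p) ℝ)
    (m : ℤ → ℝ → Matrix (Fin p) (Fin p) ℝ)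
    (hm : ∀ (j : ℤ) (t : ℝ) (x y : Fin p),
      HasDerivAt (fun s => m j s x y) ((m j t * K) x y) t)
    (hΛ : ∀ n : ℕ, 1 ≤ n → ∀ t : ℝ, IsUnit (blockLam p n (fun j => m j t))) :
    ∀ n : ℕ, 1 ≤ n → ∀ (t : ℝ) (x y : Fin p),
      HasDerivAt (fun s => Hexpr p n (fun j => m j s) x y)
        ((Hexpr p n (fun j => m j t) * K) x y) t ∧
      HasDerivAt (fun s => tauexpr p n (fun j => m j s) x y)
        ((tauexpr p n (fun j => m j t) * K) x y) t := by
  intro n hn t x y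
  constructor
  · simpa only [Hexpr] using key_deriv hn K m hm (hΛ n hn) 0 (-(n : ℤ)) t x y
  · simpa only [tauexpr] using key_deriv hn K m hm (hΛ n hn) ((n : ℤ) + 1) 1 t x y
end

section
/- Let N, q ≥ 1, let D ∈ Mat_{N×N}(ℝ) and K ∈ Mat_{q×q}(ℝ) be fixed matrices, and let A : ℝ → Mat_{N×N}(ℝ), B : ℝ → Mat_{N×q}(ℝ), C : ℝ → Mat_{q×N}(ℝ), d : ℝ → Mat_{q×q}(ℝ) be differentiable with A(t) invertible for all t. Suppose A′(t) = A(t)D, B′(t) = B(t)K, C′(t) = C(t)D and d′(t) = d(t)K for all t. Then the Schur complement S(t) := d(t) − C(t)A(t)^{−1}B(t) satisfies S′(t) = S(t) K for all t. -/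
/-- Entrywise differentiability implies differentiability of the determinant. -/
lemma diffAt_det {n : Type*} [Fintype n] [DecidableEq n]
    (M : ℝ → Matrix n n ℝ) (t : ℝ)
    (h : ∀ i j, DifferentiableAt ℝ (fun s => M s i j) t) :
    DifferentiableAt ℝ (fun s => (M s).det) t := by
  simp only [Matrix.det_apply']
  apply DifferentiableAt.fun_sum
  intro σ _
  exact (DifferentiableAt.fun_finsetProd (fun i _ => h (σ i) i)).const_mul _

/-- Entrywise differentiability of the inverse. -/
lemma diffAt_inv_entry {n : Type*} [Fintype n] [DecidableEq n]
    (M : ℝ → Matrix n n ℝ) (t : ℝ) (hu : IsUnit (M t))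
    (h : ∀ (s : ℝ) (i j : n), DifferentiableAt ℝ (fun s' => M s' i j) s)
    (i j : n) :
    DifferentiableAt ℝ (fun s => (M s)⁻¹ i j) t := by
  have hdet : (M t).det ≠ 0 := ((Matrix.isUnit_iff_isUnit_det (M t)).mp hu).ne_zero
  have hadj : DifferentiableAt ℝ (fun s => (M s).adjugate i j) t := by
    simp only [Matrix.adjugate_apply]
    apply diffAt_det
    intro k l
    simp only [Matrix.updateRow_apply]
    by_cases hk : k = j
    · simp [hk]
    · simp only [hk, if_false]
      exact h t k l
  have heq : (fun s => (M s)⁻¹ i j) = fun s => ((M s).det)⁻¹ * (M s).adjugate i j := by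
    ext s
    rw [Matrix.inv_def]
    simp [Ring.inverse_eq_inv']
  rw [heq]
  exact ((diffAt_det M t fun i j => h t i j).inv hdet).mul hadj

/-- Entrywise product rule for matrices. -/
lemma hasDerivAt_mul_entry {α β γ : Type*} [Fintype β]
    (M : ℝ → Matrix α β ℝ) (P : ℝ → Matrix β γ ℝ)
    (M' : Matrix α β ℝ) (P' : Matrix β γ ℝ) (t : ℝ)
    (hM : ∀ i j, HasDerivAt (fun s => M s i j) (M' i j) t)
    (hP : ∀ i j, HasDerivAt (fun s => P s i j) (P' i j) t)
    (i : α) (j : γ) :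
    HasDerivAt (fun s => (M s * P s) i j) ((M' * P t + M t * P') i j) t := by
  simp only [Matrix.mul_apply, Matrix.add_apply, ← Finset.sum_add_distrib]
  exact HasDerivAt.fun_sum fun k _ => (hM i k).mul (hP k j)

/-- if `A' = AD`, `B' = BK`, `C' = CD`, `d' = dK` with `A(t)`
invertible for all `t`, then the Schur complement `S = d - C A⁻¹ B` satisfies
`S' = S K`. -/
theorem statement11 {N q : ℕ} (hN : 1 ≤ N) (hq : 1 ≤ q)
    (D : Matrix (Fin N) (Fin N) ℝ) (K : Matrix (Fin q) (Fin q) ℝ)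
    (A : ℝ → Matrix (Fin N) (Fin N) ℝ)
    (B : ℝ → Matrix (Fin N) (Fin q) ℝ)
    (C : ℝ → Matrix (Fin q) (Fin N) ℝ)
    (d : ℝ → Matrix (Fin q) (Fin q) ℝ)
    (hAinv : ∀ t : ℝ, IsUnit (A t))
    (hA : ∀ (t : ℝ) (i j : Fin N), HasDerivAt (fun s => A s i j) ((A t * D) i j) t)
    (hB : ∀ (t : ℝ) (i : Fin N) (j : Fin q),
      HasDerivAt (fun s => B s i j) ((B t * K) i j) t)
    (hC : ∀ (t : ℝ) (i : Fin q) (j : Fin N),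
      HasDerivAt (fun s => C s i j) ((C t * D) i j) t)
    (hd : ∀ (t : ℝ) (i j : Fin q), HasDerivAt (fun s => d s i j) ((d t * K) i j) t) :
    ∀ (t : ℝ) (i j : Fin q),
      HasDerivAt (fun s => (d s - C s * (A s)⁻¹ * B s) i j)
        (((d t - C t * (A t)⁻¹ * B t) * K) i j) t := by
  intro t i j
  set F : ℝ → Matrix (Fin N) (Fin N) ℝ := fun s => (A s)⁻¹ with hFdef
  have hdetA : ∀ s : ℝ, IsUnit (A s).det := fun s =>
    (Matrix.isUnit_iff_isUnit_det (A s)).mp (hAinv s)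
  have hFd : ∀ i j, DifferentiableAt ℝ (fun s => F s i j) t := fun i j =>
    diffAt_inv_entry A t (hAinv t) (fun s i j => (hA s i j).differentiableAt) i j
  set F' : Matrix (Fin N) (Fin N) ℝ := Matrix.of fun i j => deriv (fun s => F s i j) t
    with hF'def
  have hF : ∀ i j, HasDerivAt (fun s => F s i j) (F' i j) t := fun i j =>
    (hFd i j).hasDerivAt
  -- A s * F s = 1, so its derivative vanishes
  have hmul : ∀ s : ℝ, A s * F s = 1 := fun s => Matrix.mul_nonsing_inv _ (hdetA s)
  have hzero : A t * D * F t + A t * F' = 0 := by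
    ext i j
    have h1 := hasDerivAt_mul_entry A F (A t * D) F' t (hA t) hF i j
    have h2 : HasDerivAt (fun s => (A s * F s) i j) 0 t := by
      simp_rw [hmul]
      exact hasDerivAt_const t _
    simpa using h1.unique h2
  have hF' : F' = -(D * F t) := by
    have h3 : A t * F' = -(A t * (D * F t)) := by
      have := eq_neg_of_add_eq_zero_right hzero
      rwa [Matrix.mul_assoc] at this
    calc F' = (F t * A t) * F' := by
            rw [Matrix.nonsing_inv_mul _ (hdetA t), Matrix.one_mul]
      _ = F t * (A t * F') := by rw [Matrix.mul_assoc]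
      _ = F t * (-(A t * (D * F t))) := by rw [h3]
      _ = -((F t * A t) * (D * F t)) := by rw [Matrix.mul_neg, Matrix.mul_assoc]
      _ = -(D * F t) := by rw [Matrix.nonsing_inv_mul _ (hdetA t), Matrix.one_mul]
  -- derivative of C s * F s is zero
  have hCF : ∀ i j, HasDerivAt (fun s => (C s * F s) i j) ((0 : Matrix (Fin q) (Fin N) ℝ) i j) t := by
    intro i j
    have := hasDerivAt_mul_entry C F (C t * D) F' t (hC t) hF i j
    have heq : C t * D * F t + C t * F' = 0 := by
      rw [hF', Matrix.mul_neg, Matrix.mul_assoc]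
      exact add_neg_cancel _
    rwa [heq] at this
  -- derivative of (C s * F s) * B s
  have hCFB := hasDerivAt_mul_entry (fun s => C s * F s) B 0 (B t * K) t hCF (hB t)
  have hfinal := (hd t i j).sub (hCFB i j)
  have hgoal : (d t * K) i j - (((0 : Matrix (Fin q) (Fin N) ℝ) * B t
        + C t * F t * (B t * K)) i j)
      = ((d t - C t * (A t)⁻¹ * B t) * K) i j := by
    simp [Matrix.sub_apply, Matrix.sub_mul, hFdef, Matrix.mul_assoc]
  simp only [Matrix.sub_apply] at hfinal ⊢
  rw [← hgoal]
  exact hfinal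
end

section
/- Let p ≥ 1, let a < 0 and b > 0 be real numbers, let j ∈ ℤ, and let V, C be p×p real matrices. Then the matrix-valued function λ ↦ λ^j · e^{aλ − b/λ} · V · exp((log λ)·C) is integrable on the interval (0, ∞) with respect to Lebesgue measure (entrywise, equivalently as a Bochner integral), where exp denotes the matrix exponential. -/
open MeasureTheory Nat

attribute [local instance] Matrix.linftyOpSemiNormedRing Matrix.linftyOpNormedRing
  Matrix.linftyOpNormedAlgebra

/-- `u^s e^{-cu}` is bounded on `[1, ∞)`. -/
lemma aux_bound_atTop (s : ℝ) {c : ℝ} (hc : 0 < c) :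
    ∃ M : ℝ, 0 ≤ M ∧ ∀ l : ℝ, 1 ≤ l → l ^ s * Real.exp (-(c * l)) ≤ M := by
  obtain ⟨n, hn⟩ : ∃ n : ℕ, s ≤ n := exists_nat_ge s
  refine ⟨(n ! : ℝ) * c⁻¹ ^ n, by positivity, fun l hl => ?_⟩
  have hl0 : (0 : ℝ) < l := lt_of_lt_of_le one_pos hl
  have h1 : l ^ s ≤ l ^ (n : ℝ) := Real.rpow_le_rpow_of_exponent_le hl hn
  have h2 : (c * l) ^ n / n ! ≤ Real.exp (c * l) :=
    Real.pow_div_factorial_le_exp (x := c * l) (by positivity) n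
  have h3 : Real.exp (-(c * l)) ≤ (n ! : ℝ) / (c * l) ^ n := by
    rw [Real.exp_neg, ← inv_div]
    exact inv_anti₀ (by positivity) h2
  calc l ^ s * Real.exp (-(c * l)) ≤ l ^ (n : ℝ) * ((n ! : ℝ) / (c * l) ^ n) :=
        mul_le_mul h1 h3 (Real.exp_pos _).le (Real.rpow_nonneg hl0.le _)
    _ = (n ! : ℝ) * c⁻¹ ^ n := by
        rw [Real.rpow_natCast, mul_pow]
        field_simp
        ring_nf; rw [← mul_pow, mul_inv_cancel₀ hc.ne', one_pow]

/-- `l^s e^{-c/l}` is bounded on `(0, 1]`. -/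
lemma aux_bound_zero (s : ℝ) {c : ℝ} (hc : 0 < c) :
    ∃ M : ℝ, 0 ≤ M ∧ ∀ l : ℝ, 0 < l → l ≤ 1 → l ^ s * Real.exp (-(c / l)) ≤ M := by
  obtain ⟨M, hM0, hM⟩ := aux_bound_atTop (-s) hc
  refine ⟨M, hM0, fun l hl0 hl1 => ?_⟩
  have h := hM l⁻¹ ((one_le_inv₀ hl0).mpr hl1)
  rw [Real.inv_rpow hl0.le, Real.rpow_neg hl0.le, inv_inv, ← div_eq_mul_inv] at h
  exact h

/-- Norm bound for the exponential in a real Banach algebra. -/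
lemma aux_norm_exp_le {𝔸 : Type*} [NormedRing 𝔸] [NormedAlgebra ℝ 𝔸] [CompleteSpace 𝔸]
    [NormOneClass 𝔸] (x : 𝔸) : ‖NormedSpace.exp x‖ ≤ Real.exp ‖x‖ := by
  rw [NormedSpace.exp_eq_tsum ℝ]
  refine (norm_tsum_le_tsum_norm (NormedSpace.norm_expSeries_summable' x)).trans ?_
  rw [Real.exp_eq_exp_ℝ, NormedSpace.exp_eq_tsum_div]
  refine Summable.tsum_le_tsum (fun n => ?_) (NormedSpace.norm_expSeries_summable' x)
    (Real.summable_pow_div_factorial _)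
  rw [norm_smul, norm_inv, Real.norm_natCast, div_eq_inv_mul]
  exact mul_le_mul_of_nonneg_left (norm_pow_le x n) (by positivity)

/-- Entry bound for the `L∞` operator norm. -/
lemma aux_entry_le {p : ℕ} (A : Matrix (Fin p) (Fin p) ℝ) (x y : Fin p) : |A x y| ≤ ‖A‖ := by
  have h : ‖A x y‖₊ ≤ ‖A‖₊ := by
    rw [Matrix.linfty_opNNNorm_def]
    exact le_trans
      (Finset.single_le_sum (f := fun j => ‖A x j‖₊) (fun j _ => _root_.zero_le) (Finset.mem_univ y))
      (Finset.le_sup (f := fun i => ∑ j, ‖A i j‖₊) (Finset.mem_univ x))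
  calc |A x y| = ‖A x y‖ := (Real.norm_eq_abs _).symm
    _ ≤ ‖A‖ := h

/-- for `a < 0`, `b > 0`, `j ∈ ℤ` and `p×p` real matrices `V`, `C`,
the matrix-valued function `λ ↦ λ^j e^{aλ - b/λ} V exp((log λ) C)` is integrable
(entrywise) on `(0, ∞)`. -/
theorem statement14 {p : ℕ} (hp : 1 ≤ p) (a b : ℝ) (ha : a < 0) (hb : 0 < b) (j : ℤ)
    (V C : Matrix (Fin p) (Fin p) ℝ) :
    ∀ x y : Fin p,
      IntegrableOn
        (fun l : ℝ =>
          ((l ^ j * Real.exp (a * l - b / l)) •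
            (V * NormedSpace.exp ((Real.log l) • C))) x y)
        (Set.Ioi (0 : ℝ)) volume := by
  intro x y
  haveI : Nonempty (Fin p) := ⟨⟨0, hp⟩⟩
  set K := ‖C‖ with hKdef
  have hK0 : (0 : ℝ) ≤ K := norm_nonneg C
  obtain ⟨M1, hM10, hM1⟩ := aux_bound_zero ((j : ℝ) - K) hb
  obtain ⟨M2, hM20, hM2⟩ := aux_bound_atTop ((j : ℝ) + K) (c := -a / 2) (by linarith)
  set M : ℝ := ‖V‖ * max M1 M2 with hMdef
  have hint : IntegrableOn (fun l : ℝ => M * Real.exp (a / 2 * l)) (Set.Ioi 0) volume := by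
    have h := (exp_neg_integrableOn_Ioi 0 (b := -a / 2) (by linarith)).const_mul M
    have : (fun l : ℝ => M * Real.exp (-(-a / 2) * l)) = fun l : ℝ => M * Real.exp (a / 2 * l) := by
      funext l; ring_nf
    rwa [this] at h
  refine Integrable.mono' hint ?_ ?_
  · -- measurability
    refine ContinuousOn.aestronglyMeasurable ?_ measurableSet_Ioi
    have h1 : ContinuousOn (fun l : ℝ => (l : ℝ) ^ j) (Set.Ioi 0) := fun l hl =>
      (continuousAt_zpow₀ _ _ (Or.inl (ne_of_gt hl))).continuousWithinAt
    have h2 : ContinuousOn (fun l : ℝ => Real.exp (a * l - b / l)) (Set.Ioi 0) :=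
      Real.continuous_exp.comp_continuousOn
        (((continuous_const.mul continuous_id).continuousOn).sub
          (continuousOn_const.div continuousOn_id fun l hl => ne_of_gt hl))
    have hlog : ContinuousOn Real.log (Set.Ioi 0) :=
      Real.continuousOn_log.mono (fun l hl => ne_of_gt hl)
    have h3 : ContinuousOn (fun l : ℝ => NormedSpace.exp ((Real.log l) • C)) (Set.Ioi 0) :=
      NormedSpace.exp_continuous.comp_continuousOn (hlog.smul continuousOn_const)
    have h4 : ContinuousOn (fun l : ℝ => (V * NormedSpace.exp ((Real.log l) • C)) x y)
        (Set.Ioi 0) := by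
      have hev : Continuous fun A : Matrix (Fin p) (Fin p) ℝ => (V * A) x y := by
        simp only [Matrix.mul_apply]
        exact continuous_finset_sum _ fun k _ =>
          continuous_const.mul ((continuous_apply y).comp (continuous_apply k))
      exact hev.comp_continuousOn h3
    exact ((h1.mul h2).smul h4)
  · -- bound
    filter_upwards [ae_restrict_mem measurableSet_Ioi] with l hl
    have hl0 : (0 : ℝ) < l := hl
    set E := NormedSpace.exp ((Real.log l) • C) with hE
    have hzpow : (0 : ℝ) < l ^ j := zpow_pos hl0 j
    have hentry : |(V * E) x y| ≤ ‖V‖ * Real.exp (|Real.log l| * K) := by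
      calc |(V * E) x y| ≤ ‖V * E‖ := aux_entry_le _ x y
        _ ≤ ‖V‖ * ‖E‖ := norm_mul_le _ _
        _ ≤ ‖V‖ * Real.exp ‖(Real.log l) • C‖ :=
            mul_le_mul_of_nonneg_left (aux_norm_exp_le _) (norm_nonneg V)
        _ = ‖V‖ * Real.exp (|Real.log l| * K) := by rw [norm_smul, Real.norm_eq_abs]
    have habs : ‖((l ^ j * Real.exp (a * l - b / l)) • (V * E)) x y‖
        = (l ^ j * Real.exp (a * l - b / l)) * |(V * E) x y| := by
      rw [Matrix.smul_apply, smul_eq_mul, Real.norm_eq_abs, abs_mul,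
        abs_of_pos (mul_pos hzpow (Real.exp_pos _))]
    rw [habs]
    have hsplit : Real.exp (a * l - b / l) = Real.exp (a * l) * Real.exp (-(b / l)) := by
      rw [← Real.exp_add]; ring_nf
    have hz : (l : ℝ) ^ j = l ^ ((j : ℝ)) := (Real.rpow_intCast l j).symm
    have key : (l ^ j * Real.exp (a * l - b / l)) * |(V * E) x y|
        ≤ ‖V‖ * (l ^ ((j : ℝ)) * Real.exp (|Real.log l| * K) * Real.exp (a * l)
            * Real.exp (-(b / l))) := by
      calc (l ^ j * Real.exp (a * l - b / l)) * |(V * E) x y|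
          ≤ (l ^ j * Real.exp (a * l - b / l)) * (‖V‖ * Real.exp (|Real.log l| * K)) :=
            mul_le_mul_of_nonneg_left hentry (mul_pos hzpow (Real.exp_pos _)).le
        _ = ‖V‖ * (l ^ ((j : ℝ)) * Real.exp (|Real.log l| * K) * Real.exp (a * l)
            * Real.exp (-(b / l))) := by rw [hsplit, hz]; ring
    refine key.trans ?_
    rcases le_total l 1 with hl1 | hl1
    · -- small l
      have hlogle : Real.log l ≤ 0 := Real.log_nonpos hl0.le hl1
      have hexpK : Real.exp (|Real.log l| * K) = l ^ (-K) := by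
        rw [abs_of_nonpos hlogle, Real.rpow_def_of_pos hl0]
        ring_nf
      have hcomb : l ^ ((j : ℝ)) * Real.exp (|Real.log l| * K) = l ^ ((j : ℝ) - K) := by
        rw [hexpK, ← Real.rpow_add hl0]
        ring_nf
      have hbd : l ^ ((j : ℝ) - K) * Real.exp (-(b / l)) ≤ M1 := hM1 l hl0 hl1
      have hexpa : Real.exp (a * l) ≤ Real.exp (a / 2 * l) :=
        Real.exp_le_exp.mpr (by nlinarith)
      calc ‖V‖ * (l ^ ((j : ℝ)) * Real.exp (|Real.log l| * K) * Real.exp (a * l)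
              * Real.exp (-(b / l)))
          = ‖V‖ * ((l ^ ((j : ℝ) - K) * Real.exp (-(b / l))) * Real.exp (a * l)) := by
            rw [← hcomb]; ring
        _ ≤ ‖V‖ * (M1 * Real.exp (a / 2 * l)) := by
            refine mul_le_mul_of_nonneg_left ?_ (norm_nonneg V)
            exact mul_le_mul hbd hexpa (Real.exp_pos _).le hM10
        _ ≤ M * Real.exp (a / 2 * l) := by
            rw [hMdef, mul_assoc]
            refine mul_le_mul_of_nonneg_left ?_ (norm_nonneg V)
            exact mul_le_mul_of_nonneg_right (le_max_left _ _) (Real.exp_pos _).le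
    · -- large l
      have hlogge : 0 ≤ Real.log l := Real.log_nonneg hl1
      have hexpK : Real.exp (|Real.log l| * K) = l ^ K := by
        rw [abs_of_nonneg hlogge, Real.rpow_def_of_pos hl0, mul_comm]
      have hcomb : l ^ ((j : ℝ)) * Real.exp (|Real.log l| * K) = l ^ ((j : ℝ) + K) := by
        rw [hexpK, ← Real.rpow_add hl0]
      have hbd : l ^ ((j : ℝ) + K) * Real.exp (-(-a / 2 * l)) ≤ M2 := hM2 l hl1
      have hexpb : Real.exp (-(b / l)) ≤ 1 :=
        Real.exp_le_one_iff.mpr (neg_nonpos.mpr (div_pos hb hl0).le)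
      have hsplita : Real.exp (a * l) = Real.exp (-(-a / 2 * l)) * Real.exp (a / 2 * l) := by
        rw [← Real.exp_add]; ring_nf
      calc ‖V‖ * (l ^ ((j : ℝ)) * Real.exp (|Real.log l| * K) * Real.exp (a * l)
              * Real.exp (-(b / l)))
          = ‖V‖ * ((l ^ ((j : ℝ) + K) * Real.exp (-(-a / 2 * l))) * Real.exp (a / 2 * l)
              * Real.exp (-(b / l))) := by rw [← hcomb, hsplita]; ring
        _ ≤ ‖V‖ * ((l ^ ((j : ℝ) + K) * Real.exp (-(-a / 2 * l))) * Real.exp (a / 2 * l) * 1) := by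
            refine mul_le_mul_of_nonneg_left ?_ (norm_nonneg V)
            refine mul_le_mul_of_nonneg_left hexpb ?_
            positivity
        _ ≤ ‖V‖ * (M2 * Real.exp (a / 2 * l)) := by
            rw [mul_one]
            refine mul_le_mul_of_nonneg_left ?_ (norm_nonneg V)
            exact mul_le_mul_of_nonneg_right hbd (Real.exp_pos _).le
        _ ≤ M * Real.exp (a / 2 * l) := by
            rw [hMdef, mul_assoc]
            refine mul_le_mul_of_nonneg_left ?_ (norm_nonneg V)
            exact mul_le_mul_of_nonneg_right (le_max_right _ _) (Real.exp_pos _).le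
end

section
/- Let p ≥ 1, let a < 0 and b > 0 be real numbers, let j ∈ ℤ, and let V, C be p×p real matrices. Then λ^{j+1} · e^{aλ − b/λ} · V · exp((log λ)·C) tends to the zero matrix both as λ → 0⁺ and as λ → +∞. -/
open Filter

open NormedSpace

section aux
attribute [local instance] Matrix.linftyOpNormedRing Matrix.linftyOpNormedAlgebra

variable {p : ℕ}

lemma my_entry_le_norm (A : Matrix (Fin p) (Fin p) ℝ) (x y : Fin p) : ‖A x y‖ ≤ ‖A‖ := by
  have h1 : ‖A x y‖₊ ≤ ∑ k, ‖A x k‖₊ :=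
    Finset.single_le_sum (f := fun k => ‖A x k‖₊) (fun _ _ => zero_le) (Finset.mem_univ y)
  have h2 : (∑ k, ‖A x k‖₊) ≤ ‖A‖₊ := by
    rw [Matrix.linfty_opNNNorm_def]
    exact Finset.le_sup (f := fun i => ∑ k, ‖A i k‖₊) (Finset.mem_univ x)
  exact_mod_cast h1.trans h2

lemma my_norm_exp_le (hp : 1 ≤ p) (A : Matrix (Fin p) (Fin p) ℝ) :
    ‖exp A‖ ≤ Real.exp ‖A‖ := by
  haveI : Nonempty (Fin p) := Fin.pos_iff_nonempty.mp hp
  have hpow : ∀ n : ℕ, ‖A ^ n‖ ≤ ‖A‖ ^ n := fun n => by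
    rcases n with _ | n
    · simp
    · exact norm_pow_le' A n.succ_pos
  have hterm : ∀ n : ℕ, ‖((Nat.factorial n : ℝ)⁻¹) • A ^ n‖ ≤ ‖A‖ ^ n / Nat.factorial n := fun n => by
    rw [norm_smul, norm_inv, Real.norm_natCast, div_eq_inv_mul]
    gcongr
    exact hpow n
  have hsum : Summable fun n : ℕ => ‖((Nat.factorial n : ℝ)⁻¹) • A ^ n‖ :=
    Summable.of_nonneg_of_le (fun n => norm_nonneg _) hterm
      (Real.summable_pow_div_factorial ‖A‖)
  calc ‖exp A‖ = ‖∑' n : ℕ, ((Nat.factorial n : ℝ)⁻¹) • A ^ n‖ := by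
        rw [exp_eq_tsum ℝ]
    _ ≤ ∑' n : ℕ, ‖((Nat.factorial n : ℝ)⁻¹) • A ^ n‖ := norm_tsum_le_tsum_norm hsum
    _ ≤ ∑' n : ℕ, ‖A‖ ^ n / Nat.factorial n :=
        Summable.tsum_le_tsum hterm hsum (Real.summable_pow_div_factorial ‖A‖)
    _ = Real.exp ‖A‖ := by
        rw [Real.exp_eq_exp_ℝ, exp_eq_tsum_div]


/-- for `a < 0`, `b > 0`, `j ∈ ℤ` and `p×p` real matrices `V`, `C`,
the matrix `λ^{j+1} e^{aλ - b/λ} V exp((log λ) C)` tends to the zero matrix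
(entrywise) both as `λ → 0⁺` and as `λ → +∞`. -/
theorem statement15 {p : ℕ} (hp : 1 ≤ p) (a b : ℝ) (ha : a < 0) (hb : 0 < b) (j : ℤ)
    (V C : Matrix (Fin p) (Fin p) ℝ) :
    ∀ x y : Fin p,
      Tendsto
        (fun l : ℝ =>
          ((l ^ (j + 1) * Real.exp (a * l - b / l)) •
            (V * NormedSpace.exp ((Real.log l) • C))) x y)
        (nhdsWithin 0 (Set.Ioi (0 : ℝ))) (nhds 0) ∧
      Tendsto
        (fun l : ℝ =>
          ((l ^ (j + 1) * Real.exp (a * l - b / l)) •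
            (V * NormedSpace.exp ((Real.log l) • C))) x y)
        atTop (nhds 0) := by
  intro x y
  set c : ℝ := ((j + 1 : ℤ) : ℝ) with hc
  -- pointwise bound for l > 0
  have key : ∀ l : ℝ, 0 < l →
      ‖((l ^ (j + 1) * Real.exp (a * l - b / l)) •
          (V * NormedSpace.exp ((Real.log l) • C))) x y‖ ≤
        Real.exp (Real.log l * c) * Real.exp (a * l - b / l) *
          (‖V‖ * Real.exp (|Real.log l| * ‖C‖)) := by
    intro l hl
    have hzpow : l ^ (j + 1) = Real.exp (Real.log l * c) := by
      rw [hc, ← Real.rpow_intCast l (j + 1), Real.rpow_def_of_pos hl]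
    have h1 : ‖((l ^ (j + 1) * Real.exp (a * l - b / l)) •
          (V * NormedSpace.exp ((Real.log l) • C))) x y‖ =
        (l ^ (j + 1) * Real.exp (a * l - b / l)) *
          ‖(V * NormedSpace.exp ((Real.log l) • C)) x y‖ := by
      rw [Matrix.smul_apply, smul_eq_mul, norm_mul, Real.norm_eq_abs, abs_of_pos]
      positivity
    rw [h1, hzpow]
    have h2 : ‖(V * NormedSpace.exp ((Real.log l) • C)) x y‖ ≤
        ‖V‖ * Real.exp (|Real.log l| * ‖C‖) := by
      calc ‖(V * NormedSpace.exp ((Real.log l) • C)) x y‖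
          ≤ ‖V * NormedSpace.exp ((Real.log l) • C)‖ := my_entry_le_norm _ x y
        _ ≤ ‖V‖ * ‖NormedSpace.exp ((Real.log l) • C)‖ := norm_mul_le _ _
        _ ≤ ‖V‖ * Real.exp ‖(Real.log l) • C‖ := by
            gcongr
            exact my_norm_exp_le hp _
        _ = ‖V‖ * Real.exp (|Real.log l| * ‖C‖) := by
            rw [norm_smul, Real.norm_eq_abs]
    gcongr
  constructor
  · -- l → 0⁺
    have hbound : Tendsto (fun l : ℝ =>
        ‖V‖ * ((l⁻¹) ^ (‖C‖ - c) * Real.exp (-b * l⁻¹)))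
        (nhdsWithin 0 (Set.Ioi (0 : ℝ))) (nhds 0) := by
      have h := (tendsto_rpow_mul_exp_neg_mul_atTop_nhds_zero (‖C‖ - c) b hb).comp
        tendsto_inv_nhdsGT_zero
      simpa using h.const_mul ‖V‖
    refine squeeze_zero_norm' ?_ hbound
    filter_upwards [Ioo_mem_nhdsGT_of_mem (Set.left_mem_Ico.mpr one_pos)] with l hl
    obtain ⟨hl0, hl1⟩ := hl
    refine (key l hl0).trans ?_
    have hlog : Real.log l ≤ 0 := Real.log_nonpos hl0.le hl1.le
    have habs : |Real.log l| = -Real.log l := abs_of_nonpos hlog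
    have hexp2 : Real.exp (a * l - b / l) ≤ Real.exp (-b * l⁻¹) := by
      apply Real.exp_le_exp.mpr
      rw [div_eq_mul_inv, neg_mul]
      nlinarith [mul_pos (neg_pos.mpr ha) hl0]
    have hrw : (l⁻¹) ^ (‖C‖ - c) =
        Real.exp (Real.log l * c) * Real.exp (-Real.log l * ‖C‖) := by
      rw [Real.rpow_def_of_pos (inv_pos.mpr hl0), Real.log_inv, ← Real.exp_add]
      ring_nf
    calc Real.exp (Real.log l * c) * Real.exp (a * l - b / l) *
          (‖V‖ * Real.exp (|Real.log l| * ‖C‖))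
        ≤ Real.exp (Real.log l * c) * Real.exp (-b * l⁻¹) *
          (‖V‖ * Real.exp (|Real.log l| * ‖C‖)) := by
          gcongr
      _ = ‖V‖ * ((l⁻¹) ^ (‖C‖ - c) * Real.exp (-b * l⁻¹)) := by
          rw [habs, hrw]; ring
  · -- l → ∞
    have hbound : Tendsto (fun l : ℝ =>
        ‖V‖ * (l ^ (c + ‖C‖) * Real.exp (-(-a) * l))) atTop (nhds 0) := by
      have h := tendsto_rpow_mul_exp_neg_mul_atTop_nhds_zero (c + ‖C‖) (-a)
        (neg_pos.mpr ha)
      simpa using h.const_mul ‖V‖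
    refine squeeze_zero_norm' ?_ hbound
    filter_upwards [eventually_ge_atTop (1 : ℝ)] with l hl1
    have hl0 : (0 : ℝ) < l := lt_of_lt_of_le one_pos hl1
    refine (key l hl0).trans ?_
    have hlog : 0 ≤ Real.log l := Real.log_nonneg hl1
    have habs : |Real.log l| = Real.log l := abs_of_nonneg hlog
    have hexp2 : Real.exp (a * l - b / l) ≤ Real.exp (a * l) := by
      apply Real.exp_le_exp.mpr
      have : 0 < b / l := div_pos hb hl0
      linarith
    have hrw : l ^ (c + ‖C‖) =
        Real.exp (Real.log l * c) * Real.exp (Real.log l * ‖C‖) := by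
      rw [Real.rpow_def_of_pos hl0, ← Real.exp_add]
      ring_nf
    calc Real.exp (Real.log l * c) * Real.exp (a * l - b / l) *
          (‖V‖ * Real.exp (|Real.log l| * ‖C‖))
        ≤ Real.exp (Real.log l * c) * Real.exp (a * l) *
          (‖V‖ * Real.exp (|Real.log l| * ‖C‖)) := by
          gcongr
      _ = ‖V‖ * (l ^ (c + ‖C‖) * Real.exp (-(-a) * l)) := by
          rw [habs, hrw, neg_neg]; ring

end aux
end

section
/- Let α₀ ≠ 0, α₁, α₂ be real numbers with α₁/α₀ < 0 and α₂/α₀ > 0, and let V, C be p×p real matrices. For j ∈ ℤ and t ∈ ℝ define m_j(t) := ∫₀^∞ λ^j e^{jα₀t} · exp((α₁/α₀)λe^{α₀t} − (α₂/α₀)λ^{−1}e^{−α₀t}) · V · exp((log λ)·C) dλ. Then each m_j is differentiable in t and satisfies m_j′(t) = −α₀ · m_j(t) · (I + C) for all j ∈ ℤ and t ∈ ℝ, where I is the p×p identity matrix. -/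
open MeasureTheory

/-- The moments
`m_j(t) := ∫₀^∞ λ^j e^{jα₀t} exp((α₁/α₀)λe^{α₀t} - (α₂/α₀)λ⁻¹e^{-α₀t}) V exp((log λ) C) dλ`,
defined entrywise as a Lebesgue integral over `(0,∞)`. -/
noncomputable def momInt (p : ℕ) (α₀ α₁ α₂ : ℝ) (V C : Matrix (Fin p) (Fin p) ℝ)
    (j : ℤ) (t : ℝ) : Matrix (Fin p) (Fin p) ℝ :=
  Matrix.of fun x y =>
    ∫ l in Set.Ioi (0 : ℝ),
      ((l ^ j * Real.exp ((j : ℝ) * α₀ * t) *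
          Real.exp (α₁ / α₀ * l * Real.exp (α₀ * t) -
            α₂ / α₀ * l⁻¹ * Real.exp (-(α₀ * t)))) •
        (V * NormedSpace.exp ((Real.log l) • C))) x y

namespace Statement18Aux

open Real Set Nat

variable {p : ℕ}

section NormWorld

attribute [local instance] Matrix.linftyOpNormedRing Matrix.linftyOpNormedAlgebra

/-- The entry map as a continuous linear map. -/
noncomputable def entryCLM (x y : Fin p) : Matrix (Fin p) (Fin p) ℝ →L[ℝ] ℝ :=
  LinearMap.toContinuousLinearMap
    { toFun := fun M => M x y
      map_add' := fun _ _ => rfl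
      map_smul' := fun _ _ => rfl }

lemma entryCLM_apply (x y : Fin p) (M : Matrix (Fin p) (Fin p) ℝ) :
    entryCLM x y M = M x y := rfl

lemma entry_abs_le_norm (M : Matrix (Fin p) (Fin p) ℝ) (x y : Fin p) : |M x y| ≤ ‖M‖ := by
  have h1 : ‖M x y‖₊ ≤ ‖M‖₊ := by
    rw [Matrix.linfty_opNNNorm_def]
    refine le_trans (Finset.single_le_sum (f := fun j => ‖M x j‖₊)
      (fun _ _ => _root_.zero_le) (Finset.mem_univ y)) ?_
    exact Finset.le_sup (f := fun i => ∑ j, ‖M i j‖₊) (Finset.mem_univ x)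
  calc |M x y| = ‖M x y‖ := (Real.norm_eq_abs _).symm
    _ ≤ ‖M‖ := by exact_mod_cast h1

lemma norm_exp_le [Nonempty (Fin p)] (M : Matrix (Fin p) (Fin p) ℝ) :
    ‖NormedSpace.exp M‖ ≤ Real.exp ‖M‖ := by
  haveI : NormOneClass (Matrix (Fin p) (Fin p) ℝ) := Matrix.linfty_opNormOneClass
  rw [Real.exp_eq_exp_ℝ, NormedSpace.exp_eq_tsum_div, NormedSpace.exp_eq_tsum (𝕂 := ℝ)]
  refine le_trans (norm_tsum_le_tsum_norm (NormedSpace.norm_expSeries_summable' M)) ?_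
  refine Summable.tsum_le_tsum (fun n => ?_) (NormedSpace.norm_expSeries_summable' M)
    (NormedSpace.expSeries_div_summable ‖M‖)
  rw [norm_smul, norm_inv, Real.norm_natCast, div_eq_inv_mul]
  gcongr
  exact norm_pow_le M n

end NormWorld

lemma pow_le_factorial_mul_exp {x : ℝ} (hx : 0 ≤ x) (n : ℕ) :
    x ^ n ≤ (n ! : ℝ) * Real.exp x := by
  have h := Real.sum_le_exp_of_nonneg hx (n + 1)
  have h1 : x ^ n / (n ! : ℝ) ≤ Real.exp x :=
    le_trans (Finset.single_le_sum (f := fun i => x ^ i / (i ! : ℝ)) (fun i _ => by positivity)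
      (Finset.self_mem_range_succ n)) h
  have hn : (0 : ℝ) < (n ! : ℝ) := by positivity
  calc x ^ n = x ^ n / (n ! : ℝ) * (n ! : ℝ) := by field_simp
    _ ≤ Real.exp x * (n ! : ℝ) := mul_le_mul_of_nonneg_right h1 hn.le
    _ = (n ! : ℝ) * Real.exp x := mul_comm _ _

lemma exp_neg_le {y : ℝ} (hy : 0 < y) (n : ℕ) : Real.exp (-y) ≤ (n ! : ℝ) / y ^ n := by
  rw [Real.exp_neg, inv_eq_one_div, div_le_div_iff₀ (Real.exp_pos y) (by positivity)]
  simpa [mul_comm] using pow_le_factorial_mul_exp hy.le n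

lemma integrable_core {a b : ℝ} (ha : a < 0) (hb : 0 < b) (r : ℝ) :
    IntegrableOn (fun x : ℝ => x ^ r * Real.exp (a * x - b * x⁻¹)) (Ioi (0 : ℝ)) := by
  have hcont : ∀ s ⊆ Ioi (0 : ℝ),
      ContinuousOn (fun x : ℝ => x ^ r * Real.exp (a * x - b * x⁻¹)) s := by
    intro s hs x hx
    have hx0 : (0 : ℝ) < x := hs hx
    refine ContinuousAt.continuousWithinAt ?_
    exact (Real.continuousAt_rpow_const x r (Or.inl hx0.ne')).mul
      (Real.continuous_exp.continuousAt.comp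
        ((continuousAt_const.mul continuousAt_id).sub
          (continuousAt_const.mul (continuousAt_inv₀ hx0.ne'))))
  have hsplit : Ioi (0 : ℝ) = Ioc 0 1 ∪ Ioi 1 := (Set.Ioc_union_Ioi_eq_Ioi zero_le_one).symm
  rw [hsplit]
  refine MeasureTheory.IntegrableOn.union ?_ ?_
  · set n : ℕ := ⌈-r⌉₊ with hn
    have hrn : (-1 : ℝ) < r + n := by
      have h2 : -r ≤ (n : ℝ) := by exact_mod_cast Nat.le_ceil (-r)
      linarith
    have hint : IntegrableOn (fun x : ℝ => ((n ! : ℝ) / b ^ n) * x ^ (r + n)) (Ioc (0 : ℝ) 1) := by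
      refine Integrable.const_mul ?_ _
      have h := intervalIntegral.intervalIntegrable_rpow' (r := r + n) (a := 0) (b := 1) hrn
      rwa [intervalIntegrable_iff_integrableOn_Ioc_of_le zero_le_one] at h
    refine Integrable.mono' hint
      ((hcont _ Set.Ioc_subset_Ioi_self).aestronglyMeasurable measurableSet_Ioc) ?_
    refine (ae_restrict_iff' measurableSet_Ioc).mpr (ae_of_all _ fun x hx => ?_)
    have hx0 : (0 : ℝ) < x := hx.1
    have hbx : Real.exp (-(b * x⁻¹)) ≤ (n ! : ℝ) / (b * x⁻¹) ^ n := exp_neg_le (by positivity) n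
    have hax : Real.exp (a * x) ≤ 1 := Real.exp_le_one_iff.mpr (by nlinarith)
    have hsum : Real.exp (a * x - b * x⁻¹) = Real.exp (a * x) * Real.exp (-(b * x⁻¹)) := by
      rw [← Real.exp_add]; ring_nf
    have hxr : (0 : ℝ) < x ^ r := Real.rpow_pos_of_pos hx0 r
    rw [Real.norm_eq_abs, abs_of_nonneg (by positivity)]
    have key : x ^ r * ((n ! : ℝ) / (b * x⁻¹) ^ n) = ((n ! : ℝ) / b ^ n) * x ^ (r + (n : ℝ)) := by
      rw [Real.rpow_add hx0, Real.rpow_natCast, mul_pow, inv_pow]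
      have hxn : x ^ n ≠ 0 := by positivity
      field_simp
    calc x ^ r * Real.exp (a * x - b * x⁻¹)
        ≤ x ^ r * ((n ! : ℝ) / (b * x⁻¹) ^ n) := by
          rw [hsum]
          refine mul_le_mul_of_nonneg_left ?_ hxr.le
          calc Real.exp (a * x) * Real.exp (-(b * x⁻¹))
              ≤ 1 * ((n ! : ℝ) / (b * x⁻¹) ^ n) :=
                mul_le_mul hax hbx (Real.exp_pos _).le zero_le_one
            _ = (n ! : ℝ) / (b * x⁻¹) ^ n := one_mul _
      _ = ((n ! : ℝ) / b ^ n) * x ^ (r + (n : ℝ)) := key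
  · set m : ℕ := ⌈r⌉₊ + 2 with hm
    have hrm : r - (m : ℝ) < -1 := by
      have h2 : r ≤ ((⌈r⌉₊ : ℕ) : ℝ) := by exact_mod_cast Nat.le_ceil r
      have h3 : ((m : ℕ) : ℝ) = ((⌈r⌉₊ : ℕ) : ℝ) + 2 := by rw [hm]; push_cast; ring
      linarith
    have hint : IntegrableOn (fun x : ℝ => ((m ! : ℝ) / (-a) ^ m) * x ^ (r - m)) (Ioi (1 : ℝ)) :=
      (integrableOn_Ioi_rpow_of_lt hrm one_pos).const_mul _
    refine Integrable.mono' hint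
      ((hcont (Ioi 1) fun x hx => (lt_trans one_pos (hx : (1 : ℝ) < x) : (0 : ℝ) < x)).aestronglyMeasurable measurableSet_Ioi) ?_
    refine (ae_restrict_iff' measurableSet_Ioi).mpr (ae_of_all _ fun x hx => ?_)
    have hx1 : (1 : ℝ) < x := hx
    have hx0 : (0 : ℝ) < x := lt_trans one_pos hx1
    have hbx : Real.exp (-(b * x⁻¹)) ≤ 1 := Real.exp_le_one_iff.mpr (neg_nonpos.mpr (by positivity))
    have hax : Real.exp (a * x) ≤ (m ! : ℝ) / ((-a) * x) ^ m := by
      have h := exp_neg_le (y := (-a) * x) (mul_pos (neg_pos.mpr ha) hx0) m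
      have h4 : -((-a) * x) = a * x := by ring
      rwa [h4] at h
    have hsum : Real.exp (a * x - b * x⁻¹) = Real.exp (a * x) * Real.exp (-(b * x⁻¹)) := by
      rw [← Real.exp_add]; ring_nf
    have hxr : (0 : ℝ) < x ^ r := Real.rpow_pos_of_pos hx0 r
    rw [Real.norm_eq_abs, abs_of_nonneg (by positivity)]
    have key : x ^ r * ((m ! : ℝ) / ((-a) * x) ^ m)
        = ((m ! : ℝ) / (-a) ^ m) * x ^ (r - (m : ℝ)) := by
      rw [Real.rpow_sub hx0, Real.rpow_natCast, mul_pow]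
      have hxm : x ^ m ≠ 0 := by positivity
      have ham : (-a) ^ m ≠ 0 := pow_ne_zero _ (ne_of_gt (neg_pos.mpr ha))
      field_simp
    calc x ^ r * Real.exp (a * x - b * x⁻¹)
        ≤ x ^ r * ((m ! : ℝ) / ((-a) * x) ^ m) := by
          rw [hsum]
          refine mul_le_mul_of_nonneg_left ?_ hxr.le
          calc Real.exp (a * x) * Real.exp (-(b * x⁻¹))
              ≤ ((m ! : ℝ) / ((-a) * x) ^ m) * 1 :=
                mul_le_mul hax hbx (Real.exp_pos _).le (div_nonneg (Nat.cast_nonneg _) (pow_nonneg (mul_pos (neg_pos.mpr ha) hx0).le _))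
            _ = (m ! : ℝ) / ((-a) * x) ^ m := mul_one _
      _ = ((m ! : ℝ) / (-a) ^ m) * x ^ (r - (m : ℝ)) := key

lemma integrable_entry {a b : ℝ} (ha : a < 0) (hb : 0 < b) (j : ℤ)
    (V C : Matrix (Fin p) (Fin p) ℝ) (x k : Fin p) :
    IntegrableOn (fun l : ℝ => l ^ j * Real.exp (a * l - b * l⁻¹) *
      (V * NormedSpace.exp (Real.log l • C)) x k) (Ioi (0 : ℝ)) := by
  letI : NormedRing (Matrix (Fin p) (Fin p) ℝ) := Matrix.linftyOpNormedRing
  letI : NormedAlgebra ℝ (Matrix (Fin p) (Fin p) ℝ) := Matrix.linftyOpNormedAlgebra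
  letI : NormedAlgebra ℚ (Matrix (Fin p) (Fin p) ℝ) := .restrictScalars ℚ ℝ _
  haveI : Nonempty (Fin p) := ⟨x⟩
  set c : ℝ := ‖C‖ with hcdef
  have hg : IntegrableOn (fun l : ℝ => ‖V‖ *
      (l ^ ((j : ℝ) + c) * Real.exp (a * l - b * l⁻¹) +
        l ^ ((j : ℝ) - c) * Real.exp (a * l - b * l⁻¹))) (Ioi (0 : ℝ)) :=
    ((integrable_core ha hb _).add (integrable_core ha hb _)).const_mul _
  refine Integrable.mono' hg ?_ ?_
  · refine ContinuousOn.aestronglyMeasurable ?_ measurableSet_Ioi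
    intro l hl
    have hl0 : (0 : ℝ) < l := hl
    refine ContinuousAt.continuousWithinAt ?_
    have h1 : ContinuousAt (fun l : ℝ => l ^ j) l := continuousAt_zpow₀ l j (Or.inl hl0.ne')
    have h2 : ContinuousAt (fun l : ℝ => Real.exp (a * l - b * l⁻¹)) l :=
      Real.continuous_exp.continuousAt.comp
        ((continuousAt_const.mul continuousAt_id).sub
          (continuousAt_const.mul (continuousAt_inv₀ hl0.ne')))
    have h3 : ContinuousAt (fun l : ℝ => (V * NormedSpace.exp (Real.log l • C)) x k) l := by
      have hlog : ContinuousAt Real.log l := Real.continuousAt_log hl0.ne'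
      have hsmul : ContinuousAt (fun l : ℝ => Real.log l • C) l := hlog.smul continuousAt_const
      have hexp : ContinuousAt (fun l : ℝ => NormedSpace.exp (Real.log l • C)) l :=
        NormedSpace.exp_continuous.continuousAt.comp hsmul
      have hmulV : Continuous fun M : Matrix (Fin p) (Fin p) ℝ => V * M :=
        continuous_const.mul continuous_id
      have hentry := (entryCLM (p := p) x k).continuous
      exact (hentry.continuousAt).comp ((hmulV.continuousAt).comp hexp)
    exact (h1.mul h2).mul h3
  · refine (ae_restrict_iff' measurableSet_Ioi).mpr (ae_of_all _ fun l hl => ?_)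
    have hl0 : (0 : ℝ) < l := hl
    have hE : (0 : ℝ) < Real.exp (a * l - b * l⁻¹) := Real.exp_pos _
    have hzpow : (0 : ℝ) < l ^ j := zpow_pos hl0 j
    have hentry : |(V * NormedSpace.exp (Real.log l • C)) x k| ≤
        ‖V‖ * Real.exp (|Real.log l| * c) := by
      refine le_trans (entry_abs_le_norm _ x k) ?_
      refine le_trans (Matrix.linfty_opNorm_mul _ _) ?_
      have h := norm_exp_le (Real.log l • C)
      rw [norm_smul, Real.norm_eq_abs] at h
      exact mul_le_mul_of_nonneg_left h (norm_nonneg V)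
    have hcomp : Real.exp (|Real.log l| * c) ≤ l ^ c + l ^ (-c) := by
      rcases le_or_gt 1 l with h1 | h1
      · have habs : |Real.log l| = Real.log l := abs_of_nonneg (Real.log_nonneg h1)
        rw [habs, ← Real.rpow_def_of_pos hl0]
        have := Real.rpow_pos_of_pos hl0 (-c)
        linarith
      · have habs : |Real.log l| = -Real.log l := abs_of_nonpos (Real.log_nonpos hl0.le h1.le)
        have h5 : |Real.log l| * c = Real.log l * (-c) := by rw [habs]; ring
        rw [h5, ← Real.rpow_def_of_pos hl0]
        have := Real.rpow_pos_of_pos hl0 c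
        linarith
    rw [Real.norm_eq_abs, abs_mul, abs_mul, abs_of_nonneg hzpow.le, abs_of_nonneg hE.le]
    have hstep : |(V * NormedSpace.exp (Real.log l • C)) x k| ≤ ‖V‖ * (l ^ c + l ^ (-c)) :=
      le_trans hentry (mul_le_mul_of_nonneg_left hcomp (norm_nonneg V))
    have e1 : l ^ ((j : ℝ) + c) = l ^ ((j : ℤ) : ℝ) * l ^ c := Real.rpow_add hl0 _ _
    have e2 : l ^ ((j : ℝ) - c) = l ^ ((j : ℤ) : ℝ) * l ^ (-c) := by
      rw [← Real.rpow_add hl0]; ring_nf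
    have e3 : l ^ ((j : ℤ) : ℝ) = l ^ j := Real.rpow_intCast l j
    calc l ^ j * Real.exp (a * l - b * l⁻¹) * |(V * NormedSpace.exp (Real.log l • C)) x k|
        ≤ l ^ j * Real.exp (a * l - b * l⁻¹) * (‖V‖ * (l ^ c + l ^ (-c))) :=
          mul_le_mul_of_nonneg_left hstep (by positivity)
      _ = ‖V‖ * (l ^ ((j : ℝ) + c) * Real.exp (a * l - b * l⁻¹) +
            l ^ ((j : ℝ) - c) * Real.exp (a * l - b * l⁻¹)) := by
          rw [e1, e2, e3]; ring

lemma momInt_eq {α₀ α₁ α₂ : ℝ} (h₁ : α₁ / α₀ < 0) (h₂ : 0 < α₂ / α₀)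
    (V C : Matrix (Fin p) (Fin p) ℝ) (j : ℤ) (t : ℝ) :
    momInt p α₀ α₁ α₂ V C j t =
      Real.exp (-(α₀ * t)) • (momInt p α₀ α₁ α₂ V C j 0 *
        NormedSpace.exp ((-(α₀ * t)) • C)) := by
  ext x y
  set a : ℝ := α₁ / α₀ with hadef
  set b : ℝ := α₂ / α₀ with hbdef
  set c : ℝ := Real.exp (-(α₀ * t)) with hcdef
  have hc : 0 < c := Real.exp_pos _
  set E : Matrix (Fin p) (Fin p) ℝ := NormedSpace.exp ((-(α₀ * t)) • C) with hEdef
  set F : ℝ → ℝ := fun l =>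
    ((l ^ j * Real.exp ((j : ℝ) * α₀ * t) *
        Real.exp (a * l * Real.exp (α₀ * t) - b * l⁻¹ * Real.exp (-(α₀ * t)))) •
      (V * NormedSpace.exp ((Real.log l) • C))) x y with hFdef
  have hLHS : momInt p α₀ α₁ α₂ V C j t x y = ∫ l in Ioi (0 : ℝ), F l := rfl
  have key : EqOn (fun μ => F (c * μ))
      (fun μ : ℝ => μ ^ j * Real.exp (a * μ - b * μ⁻¹) *
        ((V * NormedSpace.exp (Real.log μ • C) * E) x y)) (Ioi (0 : ℝ)) := by
    intro μ hμ
    have hμ0 : (0 : ℝ) < μ := hμ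
    have s1 : (c * μ) ^ j * Real.exp ((j : ℝ) * α₀ * t) = μ ^ j := by
      rw [mul_zpow, ← Real.rpow_intCast c j, hcdef, Real.rpow_def_of_pos (Real.exp_pos _),
        Real.log_exp]
      rw [mul_assoc, mul_comm (μ ^ j), ← mul_assoc, ← Real.exp_add]
      have h0 : -(α₀ * t) * (j : ℝ) + (j : ℝ) * α₀ * t = 0 := by ring
      rw [h0, Real.exp_zero, one_mul]
    have s2 : a * (c * μ) * Real.exp (α₀ * t) = a * μ := by
      have h1 : c * Real.exp (α₀ * t) = 1 := by
        rw [hcdef, ← Real.exp_add]; norm_num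
      calc a * (c * μ) * Real.exp (α₀ * t) = a * μ * (c * Real.exp (α₀ * t)) := by ring
        _ = a * μ := by rw [h1, mul_one]
    have s3 : b * (c * μ)⁻¹ * Real.exp (-(α₀ * t)) = b * μ⁻¹ := by
      have h1 : c⁻¹ * Real.exp (-(α₀ * t)) = 1 := by
        rw [hcdef]; exact inv_mul_cancel₀ (Real.exp_ne_zero _)
      rw [mul_inv]
      calc b * (c⁻¹ * μ⁻¹) * Real.exp (-(α₀ * t))
          = b * μ⁻¹ * (c⁻¹ * Real.exp (-(α₀ * t))) := by ring
        _ = b * μ⁻¹ := by rw [h1, mul_one]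
    have s4 : Real.log (c * μ) = Real.log μ + -(α₀ * t) := by
      rw [hcdef, Real.log_mul (Real.exp_ne_zero _) hμ0.ne', Real.log_exp]; ring
    have s5 : NormedSpace.exp (Real.log (c * μ) • C) =
        NormedSpace.exp (Real.log μ • C) * E := by
      rw [s4, add_smul, Matrix.exp_add_of_commute _ _
        (((Commute.refl C).smul_left _).smul_right _), hEdef]
    simp only [hFdef, Matrix.smul_apply, smul_eq_mul]
    rw [s1, s2, s3, s5, ← Matrix.mul_assoc]
  have hsub : (∫ l in Ioi (0 : ℝ), F l) = c • ∫ μ in Ioi (0 : ℝ), F (c * μ) := by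
    rw [MeasureTheory.integral_comp_mul_left_Ioi F 0 hc, mul_zero, smul_smul,
      mul_inv_cancel₀ hc.ne', one_smul]
  have hswap : (∫ μ in Ioi (0 : ℝ), μ ^ j * Real.exp (a * μ - b * μ⁻¹) *
        ((V * NormedSpace.exp (Real.log μ • C) * E) x y))
      = ∑ k, (∫ μ in Ioi (0 : ℝ), μ ^ j * Real.exp (a * μ - b * μ⁻¹) *
          (V * NormedSpace.exp (Real.log μ • C)) x k) * E k y := by
    have hrw : ∀ μ : ℝ, μ ^ j * Real.exp (a * μ - b * μ⁻¹) *
        ((V * NormedSpace.exp (Real.log μ • C) * E) x y)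
        = ∑ k, (μ ^ j * Real.exp (a * μ - b * μ⁻¹) *
            (V * NormedSpace.exp (Real.log μ • C)) x k) * E k y := by
      intro μ
      rw [Matrix.mul_apply, Finset.mul_sum]
      exact Finset.sum_congr rfl fun k _ => (mul_assoc _ _ _).symm
    simp_rw [hrw]
    rw [MeasureTheory.integral_finset_sum]
    · exact Finset.sum_congr rfl fun k _ => MeasureTheory.integral_mul_const _ _
    · intro k _
      exact (integrable_entry h₁ h₂ j V C x k).mul_const _
  have hzero : ∀ k, momInt p α₀ α₁ α₂ V C j 0 x k
      = ∫ μ in Ioi (0 : ℝ), μ ^ j * Real.exp (a * μ - b * μ⁻¹) *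
          (V * NormedSpace.exp (Real.log μ • C)) x k := by
    intro k
    show (∫ l in Ioi (0 : ℝ),
      ((l ^ j * Real.exp ((j : ℝ) * α₀ * 0) *
          Real.exp (a * l * Real.exp (α₀ * 0) - b * l⁻¹ * Real.exp (-(α₀ * 0)))) •
        (V * NormedSpace.exp ((Real.log l) • C))) x k) = _
    simp only [mul_zero, neg_zero, Real.exp_zero, mul_one, Matrix.smul_apply, smul_eq_mul]
  have hRHS : (c • (momInt p α₀ α₁ α₂ V C j 0 * E)) x y
      = c * ∑ k, momInt p α₀ α₁ α₂ V C j 0 x k * E k y := by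
    simp [Matrix.smul_apply, smul_eq_mul, Matrix.mul_apply]
  rw [hLHS, hsub, setIntegral_congr_fun measurableSet_Ioi key, hswap, hRHS, smul_eq_mul]
  congr 1
  exact Finset.sum_congr rfl fun k _ => by rw [hzero k]

section DerivWorld

attribute [local instance] Matrix.linftyOpNormedRing Matrix.linftyOpNormedAlgebra

lemma hasDerivAt_matrix (α₀ : ℝ) (A C : Matrix (Fin p) (Fin p) ℝ) (t : ℝ) :
    HasDerivAt (fun s : ℝ => Real.exp (-(α₀ * s)) • (A * NormedSpace.exp ((-(α₀ * s)) • C)))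
      ((-α₀) • (Real.exp (-(α₀ * t)) • (A * NormedSpace.exp ((-(α₀ * t)) • C)) * (1 + C)))
      t := by
  have hu : HasDerivAt (fun s : ℝ => -(α₀ * s)) (-α₀) t := by
    simpa using (hasDerivAt_id t).const_mul (-α₀)
  have hexp : HasDerivAt (fun s : ℝ => NormedSpace.exp ((-(α₀ * s)) • C))
      ((-α₀) • (NormedSpace.exp ((-(α₀ * t)) • C) * C)) t := by
    have h := hasDerivAt_exp_smul_const (𝕂 := ℝ) C (-(α₀ * t))
    exact h.scomp t hu
  have hsc : HasDerivAt (fun s : ℝ => Real.exp (-(α₀ * s)))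
      (Real.exp (-(α₀ * t)) * (-α₀)) t :=
    (Real.hasDerivAt_exp _).comp t hu
  have hAE : HasDerivAt (fun s : ℝ => A * NormedSpace.exp ((-(α₀ * s)) • C))
      (A * ((-α₀) • (NormedSpace.exp ((-(α₀ * t)) • C) * C))) t :=
    HasDerivAt.const_mul A hexp
  have h := hsc.smul hAE
  refine h.congr_deriv ?_
  symm
  rw [mul_smul_comm, smul_mul_assoc, mul_add, mul_one, mul_assoc]
  module

lemma main_entry {α₀ α₁ α₂ : ℝ} (h₁ : α₁ / α₀ < 0) (h₂ : 0 < α₂ / α₀)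
    (V C : Matrix (Fin p) (Fin p) ℝ) (j : ℤ) (t : ℝ) (x y : Fin p) :
    HasDerivAt (fun s => momInt p α₀ α₁ α₂ V C j s x y)
      (((-α₀) • (momInt p α₀ α₁ α₂ V C j t * (1 + C))) x y) t := by
  set A := momInt p α₀ α₁ α₂ V C j 0 with hA
  have hMat := hasDerivAt_matrix α₀ A C t
  have hEntry := (entryCLM x y).hasFDerivAt.comp_hasDerivAt t hMat
  have hfun : (fun s => momInt p α₀ α₁ α₂ V C j s x y)
      = fun s => entryCLM x y
          (Real.exp (-(α₀ * s)) • (A * NormedSpace.exp ((-(α₀ * s)) • C))) := by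
    funext s
    rw [momInt_eq h₁ h₂ V C j s]
    rfl
  have hder : ((-α₀) • (momInt p α₀ α₁ α₂ V C j t * (1 + C))) x y
      = entryCLM x y
          ((-α₀) • (Real.exp (-(α₀ * t)) • (A * NormedSpace.exp ((-(α₀ * t)) • C)) * (1 + C)))
      := by
    rw [momInt_eq h₁ h₂ V C j t]
    rfl
  rw [hfun, hder]
  exact hEntry

end DerivWorld

end Statement18Aux

/-- the moments `m_j(t)` are differentiable in `t` and satisfy
`m_j'(t) = -α₀ m_j(t) (I + C)`. -/
theorem statement18 {p : ℕ} (hp : 1 ≤ p) (α₀ α₁ α₂ : ℝ) (hα₀ : α₀ ≠ 0)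
    (h₁ : α₁ / α₀ < 0) (h₂ : 0 < α₂ / α₀)
    (V C : Matrix (Fin p) (Fin p) ℝ) :
    ∀ (j : ℤ) (t : ℝ) (x y : Fin p),
      HasDerivAt (fun s => momInt p α₀ α₁ α₂ V C j s x y)
        (((-α₀) • (momInt p α₀ α₁ α₂ V C j t * (1 + C))) x y) t := by
  intro j t x y
  exact Statement18Aux.main_entry h₁ h₂ V C j t x y
end
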